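/- arXiv:1905.04645 — 5 statements merged into one kernel-verified Lean document; each statement's English description precedes it below -/
import Mathlib

section
/- Let E1, E2 ∈ (M, c_k, n_k) be Moran sets, let U ⊆ ℝ² be an open set, and let f : U → ℝ be continuously differentiable on U. Suppose there exists a point (x0, y0) ∈ (E1 × E2) ∩ U with ∂_x f(x0, y0) ≠ 0 such that sup_{k≥1} (1 − c_k n_k) < |∂_y f(x0, y0) / ∂_x f(x0, y0)| < inf_{k≥1} ( c_k / (1 − n_k c_k) ). Then the set f_U(E1, E2) = { f(x, y) : (x, y) ∈ (E1 × E2) ∩ U } has nonempty interior in ℝ. -/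
open Set
/-- A word of rank `k`: the `j`-th letter is an element of `Fin (nseq j)`
(so there are `nseq j` choices for the letter at position `j`). -/
def MoranWord (nseq : ℕ → ℕ) (k : ℕ) : Type := ∀ j : Fin k, Fin (nseq j)

/-- A Moran structure on `[0,1]` with branching numbers `nseq` and contraction
ratios `cseq` (the index `k : ℕ` here corresponds to the index `k + 1` in the paper):
a family of nondegenerate closed intervals `T k σ ⊆ [0,1]`, indexed by words, such
that the `nseq k` children of a rank-`k` interval are subintervals with pairwise
disjoint interiors, each of relative length `cseq k`, whose union has the same
convex hull as the parent. -/
structure MoranStructure (nseq : ℕ → ℕ) (cseq : ℕ → ℝ) where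
  T : (k : ℕ) → MoranWord nseq k → Set ℝ
  root : T 0 (fun j => j.elim0) = Icc (0 : ℝ) 1
  isClosedInterval : ∀ (k : ℕ) (σ : MoranWord nseq k), ∃ x y : ℝ, x < y ∧ T k σ = Icc x y
  child_subset : ∀ (k : ℕ) (σ : MoranWord nseq k) (i : Fin (nseq k)),
    T (k + 1) (Fin.snoc σ i) ⊆ T k σ
  disjoint_interiors : ∀ (k : ℕ) (σ : MoranWord nseq k) (i i' : Fin (nseq k)), i ≠ i' →
    interior (T (k + 1) (Fin.snoc σ i)) ∩ interior (T (k + 1) (Fin.snoc σ i')) = ∅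
  ratio : ∀ (k : ℕ) (σ : MoranWord nseq k) (i : Fin (nseq k)),
    Metric.diam (T (k + 1) (Fin.snoc σ i)) = cseq k * Metric.diam (T k σ)
  hull : ∀ (k : ℕ) (σ : MoranWord nseq k),
    convexHull ℝ (⋃ i : Fin (nseq k), T (k + 1) (Fin.snoc σ i)) = T k σ

/-- The union `E_k` of all basic intervals of rank `k`. -/
def MoranStructure.level {nseq : ℕ → ℕ} {cseq : ℕ → ℝ}
    (M : MoranStructure nseq cseq) (k : ℕ) : Set ℝ :=
  ⋃ σ : MoranWord nseq k, M.T k σ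

/-- The Moran set `E = ⋂_{k ≥ 1} ⋃_{σ ∈ D_k} T_σ` associated with a Moran structure. -/
def MoranStructure.moranSet {nseq : ℕ → ℕ} {cseq : ℕ → ℝ}
    (M : MoranStructure nseq cseq) : Set ℝ :=
  ⋂ k : ℕ, M.level (k + 1)

/-- `Ĩ` for the rank-`k` basic interval `I = T k σ`: the union of its rank-`(k+1)` children. -/
def MoranStructure.tilde {nseq : ℕ → ℕ} {cseq : ℕ → ℝ}
    (M : MoranStructure nseq cseq) (k : ℕ) (σ : MoranWord nseq k) : Set ℝ :=
  ⋃ i : Fin (nseq k), M.T (k + 1) (Fin.snoc σ i)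

private lemma same_sign {p q : ℝ} (h : |p - q| < |q|) : 0 < p * q := by
  rcases lt_trichotomy q 0 with hq | hq | hq
  · rw [abs_of_neg hq] at h
    have := abs_lt.mp h
    nlinarith
  · rw [hq] at h; simp at h; linarith [abs_nonneg p]
  · rw [abs_of_pos hq] at h
    have := abs_lt.mp h
    nlinarith

set_option maxHeartbeats 1000000 in
lemma core_step (f : ℝ × ℝ → ℝ) (A B ε a b α β x y t : ℝ)
    (hε : 0 ≤ ε) (hA : ε < |A|) (hB : ε < |B|)
    (hest : ∀ x1 ∈ Icc a b, ∀ x2 ∈ Icc a b, ∀ y1 ∈ Icc α β, ∀ y2 ∈ Icc α β,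
      |f (x2, y2) - f (x1, y1) - (A * (x2 - x1) + B * (y2 - y1))|
        ≤ ε * max |x2 - x1| |y2 - y1|)
    (hx : x ∈ Icc a b) (hy : y ∈ Icc α β) (hft : f (x, y) = t)
    (hsize : (|B| + ε) * (β - α) < (|A| - ε) * (b - a)) :
    ∃ x' ∈ Icc a b, f (x', α) = t ∨ f (x', β) = t := by
  have hab : a ≤ b := hx.1.trans hx.2
  have hαβ : α ≤ β := hy.1.trans hy.2
  have hα : α ∈ Icc α β := left_mem_Icc.mpr hαβ
  have hβ : β ∈ Icc α β := right_mem_Icc.mpr hαβ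
  have hApos : (0:ℝ) < |A| - ε := by linarith
  have hAne : A ≠ 0 := fun h => by rw [h] at hA; simp at hA; linarith
  have hBne : B ≠ 0 := fun h => by rw [h] at hB; simp at hB; linarith
  obtain ⟨κ, hκ⟩ : ∃ κ : ℝ, κ = |A| / (|A| - ε) := ⟨_, rfl⟩
  have hκpos : 0 < κ := by rw [hκ]; positivity
  have hκ1 : κ - 1 = ε / (|A| - ε) := by rw [hκ]; field_simp; ring
  have habsgen : ∀ d : ℝ, |-(d * κ) / A| = |d| / (|A| - ε) := by
    intro d
    rw [abs_div, abs_neg, abs_mul, hκ, abs_div, abs_abs, abs_of_pos hApos]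
    field_simp
  -- continuity of horizontal slices
  have hcont : ∀ γ ∈ Icc α β, ContinuousOn (fun u => f (u, γ) - t) (Icc a b) := by
    intro γ hγ
    have : LipschitzOnWith (Real.toNNReal (|A| + ε)) (fun u => f (u, γ) - t) (Icc a b) := by
      rw [lipschitzOnWith_iff_dist_le_mul]
      intro u hu v hv
      have h := hest v hv u hu γ hγ γ hγ
      simp only [sub_self, mul_zero, add_zero, abs_zero] at h
      rw [max_eq_left (abs_nonneg _)] at h
      have h2 : |f (u, γ) - f (v, γ)| ≤ |A * (u-v)| + |f (u, γ) - f (v, γ) - A * (u - v)| := by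
        have := abs_add_le (A * (u-v)) (f (u, γ) - f (v, γ) - A * (u - v))
        simpa [add_sub_cancel] using this
      rw [abs_mul] at h2
      rw [Real.dist_eq, Real.dist_eq, Real.coe_toNNReal _ (by positivity)]
      have heq : f (u, γ) - t - (f (v, γ) - t) = f (u, γ) - f (v, γ) := by ring
      rw [heq]
      nlinarith [abs_nonneg (u - v)]
    exact this.continuousOn
  -- the mover: if the determined displacement stays in range, we get a root on edge γ
  have mover : ∀ γ ∈ Icc α β, x + -((f (x, γ) - t) * κ) / A ∈ Icc a b →
      ∃ x' ∈ Icc a b, f (x', γ) = t := by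
    intro γ hγ hin
    obtain ⟨d, hd⟩ : ∃ d : ℝ, d = f (x, γ) - t := ⟨_, rfl⟩
    obtain ⟨s, hs⟩ : ∃ s : ℝ, s = -(d * κ) / A := ⟨_, rfl⟩
    have hAs : A * s = -(d * κ) := by rw [hs]; field_simp
    have habs : |s| = |d| / (|A| - ε) := by rw [hs]; exact habsgen d
    have hx'' : x + s ∈ Icc a b := by rw [hs, hd]; exact hin
    have hsign : (f (x + s, γ) - t) * d ≤ 0 := by
      have hest' := hest x hx (x + s) hx'' γ hγ γ hγ
      simp only [sub_self, mul_zero, add_zero, add_sub_cancel_left, abs_zero] at hest'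
      rw [max_eq_left (abs_nonneg s)] at hest'
      obtain ⟨e, he⟩ : ∃ e : ℝ, e = f (x + s, γ) - f (x, γ) - A * s := ⟨_, rfl⟩
      have hfe : f (x + s, γ) - t = d + A * s + e := by rw [he, hd]; ring
      have heb : |e| ≤ ε * |s| := by rw [he]; exact hest'
      rw [hfe, hAs]
      have hexp : (d + -(d * κ) + e) * d = -(d * d * (κ - 1)) + e * d := by ring
      rw [hexp]
      have h2 : e * d ≤ ε * |s| * |d| := by
        calc e * d ≤ |e * d| := le_abs_self _
          _ = |e| * |d| := abs_mul _ _
          _ ≤ ε * |s| * |d| := mul_le_mul_of_nonneg_right heb (abs_nonneg _)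
      have h3 : d * d * (κ - 1) = ε * |s| * |d| := by
        rw [hκ1, habs]
        field_simp
        linear_combination (-ε) * abs_mul_abs_self d
      linarith
    -- IVT between x and x + s
    have hsub : uIcc x (x + s) ⊆ Icc a b := uIcc_subset_Icc hx hx''
    have hcγ : ContinuousOn (fun u => f (u, γ) - t) (uIcc x (x + s)) :=
      (hcont γ hγ).mono hsub
    have hzero : (0:ℝ) ∈ uIcc (f (x, γ) - t) (f (x + s, γ) - t) := by
      rw [← hd, mem_uIcc]
      rcases le_total d 0 with h1 | h1 <;> rcases le_total (f (x + s, γ) - t) 0 with h2 | h2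
      · have h0 : (f (x + s, γ) - t) * d = 0 :=
          le_antisymm hsign (by nlinarith)
        rcases mul_eq_zero.mp h0 with h | h
        · exact Or.inl ⟨h1, le_of_eq h.symm⟩
        · exact Or.inr ⟨h2, le_of_eq h.symm⟩
      · exact Or.inl ⟨h1, h2⟩
      · exact Or.inr ⟨h2, h1⟩
      · have h0 : (f (x + s, γ) - t) * d = 0 :=
          le_antisymm hsign (by nlinarith)
        rcases mul_eq_zero.mp h0 with h | h
        · exact Or.inr ⟨le_of_eq h, h1⟩
        · exact Or.inl ⟨le_of_eq h, h2⟩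
    obtain ⟨x', hx', hfx'⟩ := intermediate_value_uIcc hcγ hzero
    exact ⟨x', hsub hx', sub_eq_zero.mp hfx'⟩
  -- defect bounds
  have hbd : ∀ γ ∈ Icc α β, |f (x, γ) - t - B * (γ - y)| ≤ ε * |γ - y| := by
    intro γ hγ
    have h := hest x hx x hx y hy γ hγ
    simp only [sub_self, mul_zero, zero_add, abs_zero, hft] at h
    rwa [max_eq_right (abs_nonneg _)] at h
  have hbd' : ∀ γ ∈ Icc α β, |f (x, γ) - t| ≤ (|B| + ε) * |γ - y| := by
    intro γ hγ
    have h := hbd γ hγ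
    have h2 : |f (x, γ) - t| ≤ |B * (γ - y)| + |f (x, γ) - t - B * (γ - y)| := by
      have := abs_add_le (B * (γ - y)) (f (x, γ) - t - B * (γ - y))
      simpa [add_sub_cancel] using this
    rw [abs_mul] at h2
    nlinarith [abs_nonneg (γ - y)]
  obtain ⟨d1, hd1⟩ : ∃ d : ℝ, d = f (x, α) - t := ⟨_, rfl⟩
  obtain ⟨d2, hd2⟩ : ∃ d : ℝ, d = f (x, β) - t := ⟨_, rfl⟩
  have hb1 : |d1| ≤ (|B| + ε) * (y - α) := by
    have h := hbd' α hα
    rw [← hd1, abs_of_nonpos (by linarith [hy.1] : α - y ≤ 0), neg_sub] at h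
    exact h
  have hb2 : |d2| ≤ (|B| + ε) * (β - y) := by
    have h := hbd' β hβ
    rw [← hd2, abs_of_nonneg (by linarith [hy.2] : (0:ℝ) ≤ β - y)] at h
    exact h
  rcases eq_or_ne d1 0 with h10 | h10
  · refine ⟨x, hx, Or.inl ?_⟩
    rw [h10] at hd1; linarith
  rcases eq_or_ne d2 0 with h20 | h20
  · refine ⟨x, hx, Or.inr ?_⟩
    rw [h20] at hd2; linarith
  -- strict separation: α < y < β
  have hyα : α < y := by
    rcases lt_or_eq_of_le hy.1 with h | h
    · exact h
    · exfalso; apply h10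
      have : |d1| ≤ 0 := by rw [← h] at hb1; simpa using hb1
      exact abs_eq_zero.mp (le_antisymm this (abs_nonneg d1))
  have hyβ : y < β := by
    rcases lt_or_eq_of_le hy.2 with h | h
    · exact h
    · exfalso; apply h20
      have : |d2| ≤ 0 := by rw [h] at hb2; simpa using hb2
      exact abs_eq_zero.mp (le_antisymm this (abs_nonneg d2))
  -- opposite signs
  have hsign1 : 0 < d1 * (B * (α - y)) := by
    apply same_sign
    have h := hbd α hα
    rw [← hd1] at h
    rw [abs_of_nonpos (by linarith : α - y ≤ 0)] at h
    rw [abs_mul, abs_of_nonpos (by linarith : α - y ≤ 0)]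
    calc |d1 - B * (α - y)| ≤ ε * -(α - y) := h
      _ < |B| * -(α - y) := by nlinarith [mul_pos (sub_pos.mpr hB) (sub_pos.mpr hyα)]
  have hsign2 : 0 < d2 * (B * (β - y)) := by
    apply same_sign
    have h := hbd β hβ
    rw [← hd2] at h
    rw [abs_of_nonneg (by linarith : (0:ℝ) ≤ β - y)] at h
    rw [abs_mul, abs_of_nonneg (by linarith : (0:ℝ) ≤ β - y)]
    calc |d2 - B * (β - y)| ≤ ε * (β - y) := h
      _ < |B| * (β - y) := by nlinarith [mul_pos (sub_pos.mpr hB) (sub_pos.mpr hyβ)]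
  have hBB : 0 < B * B := mul_self_pos.mpr hBne
  have huv : (B * (α - y)) * (B * (β - y)) < 0 := by
    have hre : (B * (α - y)) * (B * (β - y)) = (B * B) * ((α - y) * (β - y)) := by ring
    rw [hre]
    exact mul_neg_of_pos_of_neg hBB (mul_neg_of_neg_of_pos (by linarith) (by linarith))
  have hd12 : d1 * d2 < 0 := by
    by_contra hcon
    push_neg at hcon
    have hprod : 0 < (d1 * (B * (α - y))) * (d2 * (B * (β - y))) := mul_pos hsign1 hsign2
    have hre : (d1 * (B * (α - y))) * (d2 * (B * (β - y)))
        = (d1 * d2) * ((B * (α - y)) * (B * (β - y))) := by ring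
    rw [hre] at hprod
    nlinarith
  -- displacements
  obtain ⟨s1, hs1⟩ : ∃ s : ℝ, s = -(d1 * κ) / A := ⟨_, rfl⟩
  obtain ⟨s2, hs2⟩ : ∃ s : ℝ, s = -(d2 * κ) / A := ⟨_, rfl⟩
  have habs1 : |s1| = |d1| / (|A| - ε) := by rw [hs1]; exact habsgen d1
  have habs2 : |s2| = |d2| / (|A| - ε) := by rw [hs2]; exact habsgen d2
  have hs12 : s1 * s2 < 0 := by
    have he : s1 * s2 = (d1 * d2) * (κ * κ) / (A * A) := by
      rw [hs1, hs2, div_mul_div_comm]; congr 1; ring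
    rw [he]
    exact div_neg_of_neg_of_pos
      (mul_neg_of_neg_of_pos hd12 (mul_pos hκpos hκpos)) (mul_self_pos.mpr hAne)
  have hsum : |s1| + |s2| < b - a := by
    rw [habs1, habs2, ← add_div, div_lt_iff₀ hApos]
    have h1 : |d1| + |d2| ≤ (|B| + ε) * (β - α) := by linarith
    linarith
  have hs1ne : s1 ≠ 0 := by
    intro h; rw [h, zero_mul] at hs12; exact lt_irrefl 0 hs12
  have hroom : x + s1 ∈ Icc a b ∨ x + s2 ∈ Icc a b := by
    by_contra hcon
    push_neg at hcon
    obtain ⟨hc1, hc2⟩ := hcon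
    rcases hs1ne.lt_or_gt with hneg | hpos
    · have hs2pos : 0 < s2 := by
        rcases le_or_gt s2 0 with h | h
        · refine absurd hs12 (not_lt.mpr ?_)
          rw [← neg_mul_neg]
          exact mul_nonneg (neg_nonneg.mpr hneg.le) (neg_nonneg.mpr h)
        · exact h
      have h1 : x + s1 < a := by
        rcases lt_or_ge (x + s1) a with h | h
        · exact h
        · exact absurd (mem_Icc.mpr ⟨h, by linarith [hx.2]⟩) hc1
      have h2 : b < x + s2 := by
        rcases le_or_gt (x + s2) b with h | h
        · exact absurd (mem_Icc.mpr ⟨by linarith [hx.1], h⟩) hc2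
        · exact h
      rw [abs_of_neg hneg, abs_of_pos hs2pos] at hsum
      linarith
    · have hs2neg : s2 < 0 := by
        rcases lt_or_ge s2 0 with h | h
        · exact h
        · exact absurd hs12 (not_lt.mpr (mul_nonneg hpos.le h))
      have h1 : b < x + s1 := by
        rcases le_or_gt (x + s1) b with h | h
        · exact absurd (mem_Icc.mpr ⟨by linarith [hx.1], h⟩) hc1
        · exact h
      have h2 : x + s2 < a := by
        rcases lt_or_ge (x + s2) a with h | h
        · exact h
        · exact absurd (mem_Icc.mpr ⟨h, by linarith [hx.2]⟩) hc2
      rw [abs_of_pos hpos, abs_of_neg hs2neg] at hsum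
      linarith
  rcases hroom with h | h
  · obtain ⟨x', hx', hfx'⟩ := mover α hα (by rw [hs1, hd1] at h; exact h)
    exact ⟨x', hx', Or.inl hfx'⟩
  · obtain ⟨x', hx', hfx'⟩ := mover β hβ (by rw [hs2, hd2] at h; exact h)
    exact ⟨x', hx', Or.inr hfx'⟩
namespace MoranStructure

variable {nseq : ℕ → ℕ} {cseq : ℕ → ℝ} (M : MoranStructure nseq cseq)

/-- every word of positive rank is a `snoc` -/
lemma word_eq_snoc {k : ℕ} (σ : MoranWord nseq (k+1)) :
    ∃ (τ : MoranWord nseq k) (i : Fin (nseq k)), σ = Fin.snoc τ i := by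
  refine ⟨fun j => σ j.castSucc, σ (Fin.last k), ?_⟩
  funext j
  refine Fin.lastCases ?_ ?_ j
  · exact (Fin.snoc_last (α := fun j : Fin (k+1) => Fin (nseq j)) _ _).symm
  · intro j'
    exact (Fin.snoc_castSucc (α := fun j : Fin (k+1) => Fin (nseq j))
      (p := fun j => σ j.castSucc) (x := σ (Fin.last k)) (i := j')).symm

lemma diam_T : ∀ (k : ℕ) (σ : MoranWord nseq k),
    Metric.diam (M.T k σ) = ∏ j ∈ Finset.range k, cseq j := by
  intro k
  induction k with
  | zero =>
    intro σ
    have hσ : σ = fun j => j.elim0 := funext fun j => j.elim0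
    rw [hσ, M.root, Finset.range_zero, Finset.prod_empty, Real.diam_Icc zero_le_one]
    norm_num
  | succ k ih =>
    intro σ
    obtain ⟨τ, i, rfl⟩ := word_eq_snoc σ
    rw [M.ratio k τ i, ih τ, Finset.prod_range_succ, mul_comm]

lemma T_eq_Icc (k : ℕ) (σ : MoranWord nseq k) :
    ∃ u v : ℝ, u < v ∧ v - u = ∏ j ∈ Finset.range k, cseq j ∧ M.T k σ = Icc u v := by
  obtain ⟨u, v, huv, hT⟩ := M.isClosedInterval k σ
  refine ⟨u, v, huv, ?_, hT⟩
  rw [← M.diam_T k σ, hT, Real.diam_Icc huv.le]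

lemma T_step_subset {k : ℕ} (σ : MoranWord nseq (k+1)) :
    M.T (k+1) σ ⊆ M.T k (fun j => σ j.castSucc) := by
  obtain ⟨τ, i, rfl⟩ := word_eq_snoc σ
  have hτ : (fun j : Fin k => Fin.snoc (α := fun j : Fin (k+1) => Fin (nseq j)) τ i j.castSucc) = τ := by
    funext j; exact Fin.snoc_castSucc _ _ j
  rw [hτ]
  exact M.child_subset k τ i

lemma T_trunc_subset : ∀ (k m : ℕ) (h : m ≤ k) (σ : MoranWord nseq k),
    M.T k σ ⊆ M.T m (fun j => σ (Fin.castLE h j)) := by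
  intro k
  induction k with
  | zero =>
    intro m h σ
    have : m = 0 := Nat.le_zero.mp h
    subst this
    exact subset_of_eq (by congr)
  | succ k ih =>
    intro m h σ
    rcases Nat.lt_or_ge m (k+1) with hm | hm
    · have hmk : m ≤ k := Nat.lt_succ_iff.mp hm
      refine subset_trans (M.T_step_subset σ) (subset_trans (ih m hmk _) (subset_of_eq ?_))
      congr
    · have : m = k + 1 := le_antisymm h hm
      subst this
      exact subset_of_eq (by congr)

lemma tilde_subset (k : ℕ) (σ : MoranWord nseq k) : M.tilde k σ ⊆ M.T k σ := by
  rw [MoranStructure.tilde]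
  exact iUnion_subset fun i => M.child_subset k σ i

lemma gap_lemma (hn : ∀ k, 2 ≤ nseq k) (hc : ∀ k, 0 < cseq k)
    (hcn : ∀ k, cseq k * (nseq k : ℝ) < 1)
    (k : ℕ) (σ : MoranWord nseq k) (z : ℝ) (hz : z ∈ M.T k σ) :
    ∃ α β : ℝ, α ≤ z ∧ z ≤ β ∧
      β - α ≤ (1 - cseq k * (nseq k : ℝ)) * ∏ j ∈ Finset.range k, cseq j ∧
      α ∈ M.tilde k σ ∧ β ∈ M.tilde k σ := by
  obtain ⟨u, v, huv, hL, hIcc⟩ := M.T_eq_Icc k σ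
  set L : ℝ := ∏ j ∈ Finset.range k, cseq j with hLdef
  have hLpos : 0 < L := by rw [← hL]; linarith
  set C : Set ℝ := M.tilde k σ with hC
  have hCsub : C ⊆ Icc u v := hIcc ▸ M.tilde_subset k σ
  have hne : ∀ i : Fin (nseq k), (M.T (k+1) (Fin.snoc σ i)).Nonempty := by
    intro i
    obtain ⟨p, q, hpq, hI⟩ := M.isClosedInterval (k+1) (Fin.snoc σ i)
    exact hI ▸ nonempty_Icc.mpr hpq.le
  have hcompact : IsCompact C := by
    apply isCompact_iUnion
    intro i
    obtain ⟨p, q, _, hI⟩ := M.isClosedInterval (k+1) (Fin.snoc σ i)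
    exact hI ▸ isCompact_Icc
  have hCne : C.Nonempty := by
    have : Nonempty (Fin (nseq k)) := Fin.pos_iff_nonempty.mp (by have := hn k; omega)
    obtain ⟨i⟩ := this
    obtain ⟨p, hp⟩ := hne i
    exact ⟨p, mem_iUnion.mpr ⟨i, hp⟩⟩
  -- the endpoints of T belong to C
  have hhull : convexHull ℝ C = Icc u v := hIcc ▸ M.hull k σ
  have hbddb : BddBelow C := hcompact.bddBelow
  have hbdda : BddAbove C := hcompact.bddAbove
  have huC : u ∈ C := by
    have h1 : sInf C ∈ C := hcompact.sInf_mem hCne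
    have h2 : u ≤ sInf C := le_csInf hCne fun w hw => (hCsub hw).1
    have h3 : sInf C ≤ u := by
      have hu : u ∈ convexHull ℝ C := hhull ▸ left_mem_Icc.mpr huv.le
      have : convexHull ℝ C ⊆ Icc (sInf C) (sSup C) :=
        convexHull_min (fun w hw => ⟨csInf_le hbddb hw, le_csSup hbdda hw⟩) (convex_Icc _ _)
      exact (this hu).1
    rwa [le_antisymm h3 h2] at h1
  have hvC : v ∈ C := by
    have h1 : sSup C ∈ C := hcompact.sSup_mem hCne
    have h2 : sSup C ≤ v := csSup_le hCne fun w hw => (hCsub hw).2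
    have h3 : v ≤ sSup C := by
      have hv : v ∈ convexHull ℝ C := hhull ▸ right_mem_Icc.mpr huv.le
      have : convexHull ℝ C ⊆ Icc (sInf C) (sSup C) :=
        convexHull_min (fun w hw => ⟨csInf_le hbddb hw, le_csSup hbdda hw⟩) (convex_Icc _ _)
      exact (this hv).2
    rwa [le_antisymm h2 h3] at h1
  rw [hIcc] at hz
  have hrhs : 0 ≤ (1 - cseq k * (nseq k : ℝ)) * L :=
    mul_nonneg (by linarith [hcn k]) hLpos.le
  -- volume of a child
  have hvolchild : ∀ i : Fin (nseq k),
      MeasureTheory.volume (M.T (k+1) (Fin.snoc σ i)) = ENNReal.ofReal (cseq k * L) := by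
    intro i
    obtain ⟨p, q, hpq, hlen, hI⟩ := M.T_eq_Icc (k+1) (Fin.snoc σ i)
    rw [hI, Real.volume_Icc, hlen, Finset.prod_range_succ, ← hLdef, mul_comm]
  have hmC : MeasurableSet C := by
    apply MeasurableSet.iUnion
    intro i
    obtain ⟨p, q, _, hI⟩ := M.isClosedInterval (k+1) (Fin.snoc σ i)
    exact hI ▸ measurableSet_Icc
  -- the children are a.e. disjoint
  have hvolC : MeasureTheory.volume C
      = (nseq k : ENNReal) * ENNReal.ofReal (cseq k * L) := by
    have hd : Pairwise (Function.onFun (MeasureTheory.AEDisjoint MeasureTheory.volume)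
        fun i : Fin (nseq k) => M.T (k+1) (Fin.snoc σ i)) := by
      intro i j hij
      show MeasureTheory.volume (M.T (k+1) (Fin.snoc σ i) ∩ M.T (k+1) (Fin.snoc σ j)) = 0
      obtain ⟨p, q, hpq, _, hI⟩ := M.T_eq_Icc (k+1) (Fin.snoc σ i)
      obtain ⟨p', q', hpq', _, hI'⟩ := M.T_eq_Icc (k+1) (Fin.snoc σ j)
      have hint := M.disjoint_interiors k σ i j hij
      rw [hI, hI'] at hint ⊢
      rw [interior_Icc, interior_Icc] at hint
      rw [Icc_inter_Icc, Real.volume_Icc]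
      rcases le_or_gt (min q q') (max p p') with h | h
      · rw [ENNReal.ofReal_eq_zero]; linarith
      · exfalso
        obtain ⟨w, hw⟩ := nonempty_Ioo.mpr h
        have hw1 : w ∈ Ioo p q := ⟨lt_of_le_of_lt (le_max_left _ _) hw.1,
          lt_of_lt_of_le hw.2 (min_le_left _ _)⟩
        have hw2 : w ∈ Ioo p' q' := ⟨lt_of_le_of_lt (le_max_right _ _) hw.1,
          lt_of_lt_of_le hw.2 (min_le_right _ _)⟩
        exact absurd (mem_inter hw1 hw2) (by rw [hint]; exact notMem_empty w)
    have hnm : ∀ i : Fin (nseq k),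
        MeasureTheory.NullMeasurableSet (M.T (k+1) (Fin.snoc σ i)) MeasureTheory.volume := by
      intro i
      obtain ⟨p, q, _, hI⟩ := M.isClosedInterval (k+1) (Fin.snoc σ i)
      exact hI ▸ measurableSet_Icc.nullMeasurableSet
    rw [hC, MoranStructure.tilde, MeasureTheory.measure_iUnion₀ hd hnm]
    rw [tsum_fintype]
    rw [Finset.sum_congr rfl (fun i _ => hvolchild i), Finset.sum_const, Finset.card_univ,
      Fintype.card_fin, nsmul_eq_mul]
  -- gap estimate via measure
  have hgapmeas : ∀ α' β' : ℝ, α' ∈ C → β' ∈ C → Ioo α' β' ∩ C = ∅ →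
      β' - α' ≤ (1 - cseq k * (nseq k : ℝ)) * L := by
    intro α' β' hα' hβ' hdisj
    rcases le_or_gt (β' - α') 0 with h0 | h0
    · linarith
    have hsub2 : Ioo α' β' ∪ C ⊆ Icc u v := by
      apply union_subset _ hCsub
      intro w hw
      exact ⟨(hCsub hα').1.trans hw.1.le, hw.2.le.trans (hCsub hβ').2⟩
    have hdisj2 : Disjoint (Ioo α' β') C := by
      rw [disjoint_iff_inter_eq_empty]; exact hdisj
    have hmeq := MeasureTheory.measure_union (μ := MeasureTheory.volume) hdisj2 hmC
    have hle : MeasureTheory.volume (Ioo α' β' ∪ C) ≤ MeasureTheory.volume (Icc u v) :=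
      MeasureTheory.measure_mono hsub2
    rw [hmeq, Real.volume_Ioo, hvolC, Real.volume_Icc, hL] at hle
    have hn0 : (0:ℝ) ≤ (nseq k : ℝ) * (cseq k * L) :=
      mul_nonneg (Nat.cast_nonneg _) (mul_nonneg (hc k).le hLpos.le)
    rw [← ENNReal.ofReal_natCast, ← ENNReal.ofReal_mul (p := (nseq k : ℝ)) (Nat.cast_nonneg _),
      ← ENNReal.ofReal_add (le_of_lt h0) hn0] at hle
    have := (ENNReal.ofReal_le_ofReal_iff hLpos.le).mp hle
    nlinarith
  -- construct the gap around z
  rcases em (z ∈ C) with hzC | hzC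
  · exact ⟨z, z, le_refl z, le_refl z, by linarith, hzC, hzC⟩
  · have hCz1 : (C ∩ Iic z).Nonempty := ⟨u, huC, hz.1⟩
    have hCz2 : (C ∩ Ici z).Nonempty := ⟨v, hvC, hz.2⟩
    have hk1 : IsCompact (C ∩ Iic z) := hcompact.inter_right isClosed_Iic
    have hk2 : IsCompact (C ∩ Ici z) := hcompact.inter_right isClosed_Ici
    set α : ℝ := sSup (C ∩ Iic z) with hα
    set β : ℝ := sInf (C ∩ Ici z) with hβ
    have hαmem : α ∈ C ∩ Iic z := hk1.sSup_mem hCz1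
    have hβmem : β ∈ C ∩ Ici z := hk2.sInf_mem hCz2
    have hgap : Ioo α β ∩ C = ∅ := by
      ext w
      simp only [mem_inter_iff, mem_Ioo, mem_empty_iff_false, iff_false, not_and]
      intro hw hwC
      rcases le_total w z with h | h
      · exact absurd (le_csSup hk1.bddAbove ⟨hwC, h⟩) (not_le.mpr hw.1)
      · exact absurd (csInf_le hk2.bddBelow ⟨hwC, h⟩) (not_le.mpr hw.2)
    exact ⟨α, β, hαmem.2, hβmem.2, hgapmeas α β hαmem.1 hβmem.1 hgap, hαmem.1, hβmem.1⟩

end MoranStructure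

set_option maxHeartbeats 1600000 in
/-- **Theorem 1.1.** Let `E1, E2 ∈ (M, c_k, n_k)` be Moran sets, `U ⊆ ℝ²`
open, `f` continuously differentiable on `U`.  If there is `(x0, y0) ∈ (E1 × E2) ∩ U`
with `∂ₓf(x0,y0) ≠ 0` and
`sup_k (1 - c_k n_k) < |∂_y f(x0,y0) / ∂_x f(x0,y0)| < inf_k (c_k / (1 - n_k c_k))`,
then `f_U(E1, E2)` has nonempty interior. -/
theorem moran_image_nonempty_interior
    (nseq : ℕ → ℕ) (cseq : ℕ → ℝ)
    (hn : ∀ k, 2 ≤ nseq k) (hc : ∀ k, 0 < cseq k)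
    (hcn : ∀ k, cseq k * (nseq k : ℝ) < 1)
    (M1 M2 : MoranStructure nseq cseq)
    (U : Set (ℝ × ℝ)) (hU : IsOpen U)
    (f : ℝ × ℝ → ℝ) (hf : ContDiffOn ℝ 1 f U)
    (x0 y0 : ℝ)
    (hmem : (x0, y0) ∈ (M1.moranSet ×ˢ M2.moranSet) ∩ U)
    (hdx : fderiv ℝ f (x0, y0) (1, 0) ≠ 0)
    (hlow : (⨆ k, (1 - cseq k * (nseq k : ℝ))) <
      |fderiv ℝ f (x0, y0) (0, 1) / fderiv ℝ f (x0, y0) (1, 0)|)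
    (hhigh : |fderiv ℝ f (x0, y0) (0, 1) / fderiv ℝ f (x0, y0) (1, 0)| <
      ⨅ k, cseq k / (1 - (nseq k : ℝ) * cseq k)) :
    (interior (f '' ((M1.moranSet ×ˢ M2.moranSet) ∩ U))).Nonempty := by
  obtain ⟨⟨hx0E, hy0E⟩, hU0⟩ := hmem
  obtain ⟨A, hA_def⟩ : ∃ A : ℝ, A = fderiv ℝ f (x0, y0) (1, 0) := ⟨_, rfl⟩
  obtain ⟨B, hB_def⟩ : ∃ B : ℝ, B = fderiv ℝ f (x0, y0) (0, 1) := ⟨_, rfl⟩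
  have hAne : A ≠ 0 := hA_def ▸ hdx
  have hApos : 0 < |A| := abs_pos.mpr hAne
  -- sup and inf facts
  have hBddA : BddAbove (range fun k => 1 - cseq k * (nseq k : ℝ)) := by
    refine ⟨1, ?_⟩
    rintro w ⟨k, rfl⟩
    have : (0:ℝ) ≤ cseq k * (nseq k : ℝ) :=
      mul_nonneg (hc k).le (Nat.cast_nonneg _)
    simp only [tsub_le_iff_right]
    linarith
  have hBddB : BddBelow (range fun k => cseq k / (1 - (nseq k : ℝ) * cseq k)) := by
    refine ⟨0, ?_⟩
    rintro w ⟨k, rfl⟩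
    have h1 : (0:ℝ) < 1 - (nseq k : ℝ) * cseq k := by
      have := hcn k; nlinarith [mul_comm (cseq k) ((nseq k : ℝ))]
    exact le_of_lt (div_pos (hc k) h1)
  have hS_le : ∀ k, 1 - cseq k * (nseq k : ℝ) ≤ ⨆ k, (1 - cseq k * (nseq k : ℝ)) :=
    fun k => le_ciSup hBddA k
  have hI_le : ∀ k, (⨅ k, cseq k / (1 - (nseq k : ℝ) * cseq k))
      ≤ cseq k / (1 - (nseq k : ℝ) * cseq k) :=
    fun k => ciInf_le hBddB k
  have hgap_pos : ∀ k, (0:ℝ) < 1 - cseq k * (nseq k : ℝ) := fun k => by linarith [hcn k]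
  have hS_pos : (0:ℝ) < ⨆ k, (1 - cseq k * (nseq k : ℝ)) :=
    lt_of_lt_of_le (hgap_pos 0) (hS_le 0)
  have hrabs : |fderiv ℝ f (x0, y0) (0, 1) / fderiv ℝ f (x0, y0) (1, 0)| = |B| / |A| := by
    rw [abs_div, hA_def, hB_def]
  rw [hrabs] at hlow hhigh
  have hBpos : 0 < |B| := by
    have h0 : 0 < |B| / |A| := lt_trans hS_pos hlow
    rcases div_pos_iff.mp h0 with ⟨h, _⟩ | ⟨_, h⟩
    · exact h
    · linarith
  -- choose ε
  obtain ⟨ε, hε_pos, hεA, hεB, hs1, hs2⟩ :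
      ∃ ε : ℝ, 0 < ε ∧ ε < |A| ∧ ε < |B| ∧
        (⨆ k, (1 - cseq k * (nseq k : ℝ))) < (|B| - ε) / (|A| + ε) ∧
        (|B| + ε) / (|A| - ε) < ⨅ k, cseq k / (1 - (nseq k : ℝ) * cseq k) := by
    have hc1 : ContinuousAt (fun e : ℝ => (|B| - e) / (|A| + e)) 0 := by
      apply ContinuousAt.div
      · fun_prop
      · fun_prop
      · exact ne_of_gt (by linarith)
    have hc2 : ContinuousAt (fun e : ℝ => (|B| + e) / (|A| - e)) 0 := by
      apply ContinuousAt.div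
      · fun_prop
      · fun_prop
      · exact ne_of_gt (by linarith)
    have ev1 : ∀ᶠ e in nhds (0:ℝ), (⨆ k, (1 - cseq k * (nseq k : ℝ)))
        < (|B| - e) / (|A| + e) :=
      continuousAt_const.eventually_lt hc1
        (by simp only [sub_zero, add_zero]; exact hlow)
    have ev2 : ∀ᶠ e in nhds (0:ℝ), (|B| + e) / (|A| - e)
        < ⨅ k, cseq k / (1 - (nseq k : ℝ) * cseq k) :=
      hc2.eventually_lt continuousAt_const
        (by simp only [add_zero, sub_zero]; exact hhigh)
    have ev3 : ∀ᶠ e in nhds (0:ℝ), e < |A| := eventually_lt_nhds hApos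
    have ev4 : ∀ᶠ e in nhds (0:ℝ), e < |B| := eventually_lt_nhds hBpos
    have evs : ∀ᶠ e in nhdsWithin (0:ℝ) (Set.Ioi 0),
        ((⨆ k, (1 - cseq k * (nseq k : ℝ))) < (|B| - e) / (|A| + e) ∧
          ((|B| + e) / (|A| - e) < ⨅ k, cseq k / (1 - (nseq k : ℝ) * cseq k) ∧
            (e < |A| ∧ e < |B|))) :=
      (ev1.and (ev2.and (ev3.and ev4))).filter_mono nhdsWithin_le_nhds
    have evpos : ∀ᶠ e in nhdsWithin (0:ℝ) (Set.Ioi 0), e ∈ Set.Ioi (0:ℝ) :=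
      eventually_mem_nhdsWithin
    obtain ⟨ε, ⟨h1, h2, h3, h4⟩, h5⟩ := (evs.and evpos).exists
    exact ⟨ε, h5, h3, h4, h1, h2⟩
  have hε : (0:ℝ) ≤ ε := hε_pos.le
  -- per-level inequalities
  have hkey1 : ∀ k, (1 - cseq k * (nseq k : ℝ)) * (|A| + ε) < |B| - ε := by
    intro k
    have h := lt_of_le_of_lt (hS_le k) hs1
    exact (lt_div_iff₀ (by linarith)).mp h
  have hkey2 : ∀ k, (|B| + ε) * (1 - cseq k * (nseq k : ℝ)) < cseq k * (|A| - ε) := by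
    intro k
    have h := lt_of_lt_of_le hs2 (hI_le k)
    have h1 : (0:ℝ) < 1 - (nseq k : ℝ) * cseq k := by
      have := hcn k; nlinarith
    have h2 : (0:ℝ) < |A| - ε := by linarith
    have := (div_lt_div_iff₀ h2 h1).mp h
    nlinarith
  -- derivative continuity radius
  have hfderiv_cont : ContinuousOn (fun p => fderiv ℝ f p) U :=
    hf.continuousOn_fderiv_of_isOpen hU le_rfl
  have hca : ContinuousAt (fun p => fderiv ℝ f p) (x0, y0) :=
    hfderiv_cont.continuousAt (hU.mem_nhds hU0)
  obtain ⟨δ1, hδ1_pos, hδ1⟩ := Metric.continuousAt_iff.mp hca ε hε_pos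
  obtain ⟨δ2, hδ2_pos, hδ2⟩ := Metric.isOpen_iff.mp hU _ hU0
  obtain ⟨ρ, hρ_pos, hρδ1, hρδ2⟩ :
      ∃ ρ : ℝ, 0 < ρ ∧ ρ < δ1 ∧ ρ < δ2 :=
    ⟨min δ1 δ2 / 2, by positivity, by
      have := min_le_left δ1 δ2; linarith [lt_min hδ1_pos hδ2_pos], by
      have := min_le_right δ1 δ2; linarith [lt_min hδ1_pos hδ2_pos]⟩
  have hKU : Metric.closedBall (x0, y0) ρ ⊆ U := fun p hp =>
    hδ2 (lt_of_le_of_lt (Metric.mem_closedBall.mp hp) hρδ2)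
  have hKd : ∀ p ∈ Metric.closedBall (x0, y0) ρ,
      ‖fderiv ℝ f p - fderiv ℝ f (x0, y0)‖ ≤ ε := by
    intro p hp
    have := hδ1 (lt_of_le_of_lt (Metric.mem_closedBall.mp hp) hρδ1)
    rw [dist_eq_norm] at this
    exact this.le
  -- the working rectangle
  obtain ⟨Ix, hIx⟩ : ∃ I : Set ℝ, I = Icc (x0 - ρ) (x0 + ρ) := ⟨_, rfl⟩
  obtain ⟨Iy, hIy⟩ : ∃ I : Set ℝ, I = Icc (y0 - ρ) (y0 + ρ) := ⟨_, rfl⟩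
  have hKeq : Ix ×ˢ Iy = Metric.closedBall (x0, y0) ρ := by
    rw [hIx, hIy, ← Real.closedBall_eq_Icc, ← Real.closedBall_eq_Icc, closedBall_prod_same]
  have hD0 : ∀ h : ℝ × ℝ, fderiv ℝ f (x0, y0) h = A * h.1 + B * h.2 := by
    intro h
    have hh : h = h.1 • ((1:ℝ), (0:ℝ)) + h.2 • ((0:ℝ), (1:ℝ)) := by
      rw [Prod.ext_iff]
      constructor <;> simp
    rw [hh, map_add, map_smul, map_smul, hA_def, hB_def]
    simp [smul_eq_mul]
    ring
  have hconvK : Convex ℝ (Ix ×ˢ Iy) := by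
    rw [hIx, hIy]; exact (convex_Icc _ _).prod (convex_Icc _ _)
  have hmean : ∀ p ∈ Ix ×ˢ Iy, ∀ q ∈ Ix ×ˢ Iy,
      ‖(f q - fderiv ℝ f (x0, y0) q) - (f p - fderiv ℝ f (x0, y0) p)‖ ≤ ε * ‖q - p‖ := by
    intro p hp q hq
    refine Convex.norm_image_sub_le_of_norm_hasFDerivWithin_le
      (f := fun z => f z - fderiv ℝ f (x0, y0) z)
      (f' := fun z => fderiv ℝ f z - fderiv ℝ f (x0, y0)) ?_ ?_ hconvK hp hq
    · intro z hz
      have hzU : z ∈ U := hKU (hKeq ▸ hz)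
      have hdiff : DifferentiableAt ℝ f z :=
        (hf.contDiffAt (hU.mem_nhds hzU)).differentiableAt one_ne_zero
      exact (hdiff.hasFDerivAt.sub ((fderiv ℝ f (x0, y0)).hasFDerivAt)).hasFDerivWithinAt
    · intro z hz
      exact hKd z (hKeq ▸ hz)
  have Hest : ∀ x1 ∈ Ix, ∀ x2 ∈ Ix, ∀ y1 ∈ Iy, ∀ y2 ∈ Iy,
      |f (x2, y2) - f (x1, y1) - (A * (x2 - x1) + B * (y2 - y1))|
        ≤ ε * max |x2 - x1| |y2 - y1| := by
    intro x1 hx1 x2 hx2 y1 hy1 y2 hy2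
    have hp : ((x1, y1) : ℝ × ℝ) ∈ Ix ×ˢ Iy := ⟨hx1, hy1⟩
    have hq : ((x2, y2) : ℝ × ℝ) ∈ Ix ×ˢ Iy := ⟨hx2, hy2⟩
    have h := hmean _ hp _ hq
    have hsub : ((x2, y2) : ℝ × ℝ) - (x1, y1) = (x2 - x1, y2 - y1) := rfl
    rw [hsub] at h
    have hnorm : ‖((x2 - x1, y2 - y1) : ℝ × ℝ)‖ = max |x2 - x1| |y2 - y1| := by
      rw [Prod.norm_def, Real.norm_eq_abs, Real.norm_eq_abs]
    rw [hnorm] at h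
    have harg : (f (x2, y2) - fderiv ℝ f (x0, y0) (x2, y2))
        - (f (x1, y1) - fderiv ℝ f (x0, y0) (x1, y1))
        = f (x2, y2) - f (x1, y1) - (A * (x2 - x1) + B * (y2 - y1)) := by
      rw [hD0 (x2, y2), hD0 (x1, y1)]
      simp only
      ring
    rw [harg, Real.norm_eq_abs] at h
    exact h
  -- restriction of the estimate to sub-rectangles
  have HestIJ : ∀ (P Q : Set ℝ), P ⊆ Ix → Q ⊆ Iy →
      ∀ x1 ∈ P, ∀ x2 ∈ P, ∀ y1 ∈ Q, ∀ y2 ∈ Q,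
      |f (x2, y2) - f (x1, y1) - (A * (x2 - x1) + B * (y2 - y1))|
        ≤ ε * max |x2 - x1| |y2 - y1| := by
    intro P Q hP hQ x1 hx1 x2 hx2 y1 hy1 y2 hy2
    exact Hest x1 (hP hx1) x2 (hP hx2) y1 (hQ hy1) y2 (hQ hy2)
  -- lengths
  have hLpos : ∀ k : ℕ, (0:ℝ) < ∏ j ∈ Finset.range k, cseq j :=
    fun k => Finset.prod_pos fun j _ => hc j
  have hhalf : ∀ j, cseq j ≤ 1 / 2 := by
    intro j
    have h1 := hcn j
    have h2 : (2:ℝ) ≤ (nseq j : ℝ) := by exact_mod_cast hn j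
    nlinarith [hc j]
  have hLhalf : ∀ k : ℕ, (∏ j ∈ Finset.range k, cseq j) ≤ (1/2 : ℝ)^k := by
    intro k
    calc (∏ j ∈ Finset.range k, cseq j) ≤ ∏ j ∈ Finset.range k, (1/2 : ℝ) :=
          Finset.prod_le_prod (fun j _ => (hc j).le) (fun j _ => hhalf j)
      _ = (1/2 : ℝ)^k := by rw [Finset.prod_const, Finset.card_range]
  -- choose starting rank
  obtain ⟨n0, hn0⟩ : ∃ n : ℕ, (1/2 : ℝ)^n < ρ :=
    exists_pow_lt_of_lt_one hρ_pos (by norm_num)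
  obtain ⟨k0, hk0⟩ : ∃ k0 : ℕ, k0 = n0 + 1 := ⟨_, rfl⟩
  have hLk0 : (∏ j ∈ Finset.range k0, cseq j) ≤ ρ := by
    calc (∏ j ∈ Finset.range k0, cseq j) ≤ (1/2 : ℝ)^k0 := hLhalf k0
      _ ≤ (1/2 : ℝ)^n0 := by
          rw [hk0]
          exact pow_le_pow_of_le_one (by norm_num) (by norm_num) (Nat.le_succ n0)
      _ ≤ ρ := hn0.le
  -- starting words
  obtain ⟨σ0, hσ0⟩ : ∃ σ : MoranWord nseq k0, x0 ∈ M1.T k0 σ := by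
    have := mem_iInter.mp hx0E n0
    rw [MoranStructure.level] at this
    rw [hk0]
    exact mem_iUnion.mp this
  obtain ⟨τ0, hτ0⟩ : ∃ τ : MoranWord nseq k0, y0 ∈ M2.T k0 τ := by
    have := mem_iInter.mp hy0E n0
    rw [MoranStructure.level] at this
    rw [hk0]
    exact mem_iUnion.mp this
  have hT1sub : M1.T k0 σ0 ⊆ Ix := by
    obtain ⟨u, v, huv, hlen, hI⟩ := M1.T_eq_Icc k0 σ0
    rw [hI, hIx]
    rw [hI] at hσ0
    intro w hw
    constructor
    · have : v - u ≤ ρ := hlen ▸ hLk0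
      have := hσ0.2; have := hw.1; simp only [mem_Icc] at *; linarith
    · have : v - u ≤ ρ := hlen ▸ hLk0
      have := hσ0.1; have := hw.2; simp only [mem_Icc] at *; linarith
  have hT2sub : M2.T k0 τ0 ⊆ Iy := by
    obtain ⟨u, v, huv, hlen, hI⟩ := M2.T_eq_Icc k0 τ0
    rw [hI, hIy]
    rw [hI] at hτ0
    intro w hw
    constructor
    · have : v - u ≤ ρ := hlen ▸ hLk0
      have := hτ0.2; have := hw.1; simp only [mem_Icc] at *; linarith
    · have : v - u ≤ ρ := hlen ▸ hLk0
      have := hτ0.1; have := hw.2; simp only [mem_Icc] at *; linarith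
  -- any t whose level set meets the starting rectangle is in the image
  have key : ∀ t : ℝ, (∃ x ∈ M1.T k0 σ0, ∃ y ∈ M2.T k0 τ0, f (x, y) = t) →
      t ∈ f '' ((M1.moranSet ×ˢ M2.moranSet) ∩ U) := by
    intro t hstart
    -- the invariant
    obtain ⟨Good, hGood_def⟩ : ∃ G : (k : ℕ) → MoranWord nseq k → MoranWord nseq k → Prop,
        G = fun k σ τ => (M1.T k σ ⊆ Ix ∧ M2.T k τ ⊆ Iy) ∧
          ∃ x ∈ M1.T k σ, ∃ y ∈ M2.T k τ, f (x, y) = t := ⟨_, rfl⟩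
    -- the refinement step
    have step : ∀ (k : ℕ) (σ τ : MoranWord nseq k), Good k σ τ →
        ∃ (i j : Fin (nseq k)), Good (k+1) (Fin.snoc σ i) (Fin.snoc τ j) := by
      intro k σ τ hGd
      rw [hGood_def] at hGd
      obtain ⟨⟨hsub1, hsub2⟩, x, hx, y, hy, hfxy⟩ := hGd
      -- refine σ using the swapped core step
      obtain ⟨α, β, hαx, hxβ, hgapb, hαC, hβC⟩ := M1.gap_lemma hn hc hcn k σ x hx
      obtain ⟨u1, v1, huv1, hlen1, hI1⟩ := M1.T_eq_Icc k σ
      obtain ⟨a2, b2, hab2, hlen2, hI2⟩ := M2.T_eq_Icc k τ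
      have hαβT : Icc α β ⊆ M1.T k σ := by
        rw [hI1]
        have hα1 : α ∈ Icc u1 v1 := hI1 ▸ (M1.tilde_subset k σ hαC)
        have hβ1 : β ∈ Icc u1 v1 := hI1 ▸ (M1.tilde_subset k σ hβC)
        intro w hw
        exact ⟨hα1.1.trans hw.1, hw.2.trans hβ1.2⟩
      have hxαβ : x ∈ Icc α β := ⟨hαx, hxβ⟩
      have hcore1 := core_step (fun p => f (p.2, p.1)) B A ε a2 b2 α β y x t
        hε hεB hεA ?_ (hI2 ▸ hy) hxαβ hfxy ?_
      rotate_left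
      · -- swapped estimate
        intro y1 hy1 y2 hy2 x1 hx1 x2 hx2
        have h := HestIJ (Icc α β) (Icc a2 b2)
          (subset_trans hαβT hsub1) (hI2 ▸ hsub2) x1 hx1 x2 hx2 y1 hy1 y2 hy2
        have harg : f (x2, y2) - f (x1, y1) - (A * (x2 - x1) + B * (y2 - y1))
            = f (x2, y2) - f (x1, y1) - (B * (y2 - y1) + A * (x2 - x1)) := by ring
        rw [harg, max_comm] at h
        exact h
      · -- swapped size condition
        have hL := hLpos k
        have hkk := hkey1 k
        have h1 : (|A| + ε) * (β - α)
            ≤ (|A| + ε) * ((1 - cseq k * (nseq k : ℝ)) * ∏ j ∈ Finset.range k, cseq j) :=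
          mul_le_mul_of_nonneg_left hgapb (by positivity)
        have h2 : (|A| + ε) * ((1 - cseq k * (nseq k : ℝ)) * ∏ j ∈ Finset.range k, cseq j)
            < (|B| - ε) * (b2 - a2) := by
          rw [hlen2]
          nlinarith
        linarith
      obtain ⟨y', hy', hor1⟩ := hcore1
      -- the new first-coordinate word and point
      have hpick1 : ∃ (i : Fin (nseq k)) (x' : ℝ),
          x' ∈ M1.T (k+1) (Fin.snoc σ i) ∧ f (x', y') = t := by
        rcases hor1 with h | h
        · obtain ⟨i, hi⟩ := mem_iUnion.mp hαC
          exact ⟨i, α, hi, h⟩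
        · obtain ⟨i, hi⟩ := mem_iUnion.mp hβC
          exact ⟨i, β, hi, h⟩
      obtain ⟨i, x', hx', hfx'⟩ := hpick1
      -- refine τ using the core step
      have hy'T : y' ∈ M2.T k τ := hI2 ▸ hy'
      obtain ⟨α2, β2, hαy2, hyβ2, hgapb2, hαC2, hβC2⟩ := M2.gap_lemma hn hc hcn k τ y' hy'T
      obtain ⟨a3, b3, hab3, hlen3, hI3⟩ := M1.T_eq_Icc (k+1) (Fin.snoc σ i)
      have hchild1 : M1.T (k+1) (Fin.snoc σ i) ⊆ M1.T k σ := M1.child_subset k σ i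
      have hα2β2T : Icc α2 β2 ⊆ M2.T k τ := by
        rw [hI2]
        have h1 : α2 ∈ Icc a2 b2 := hI2 ▸ (M2.tilde_subset k τ hαC2)
        have h2 : β2 ∈ Icc a2 b2 := hI2 ▸ (M2.tilde_subset k τ hβC2)
        intro w hw
        exact ⟨h1.1.trans hw.1, hw.2.trans h2.2⟩
      have hcore2 := core_step f A B ε a3 b3 α2 β2 x' y' t
        hε hεA hεB ?_ (hI3 ▸ hx') ⟨hαy2, hyβ2⟩ hfx' ?_
      rotate_left
      · intro x1 hx1 x2 hx2 y1 hy1 y2 hy2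
        exact HestIJ (Icc a3 b3) (Icc α2 β2)
          (hI3 ▸ subset_trans hchild1 hsub1) (subset_trans hα2β2T hsub2)
          x1 hx1 x2 hx2 y1 hy1 y2 hy2
      · have hL := hLpos k
        have hkk := hkey2 k
        have h1 : (|B| + ε) * (β2 - α2)
            ≤ (|B| + ε) * ((1 - cseq k * (nseq k : ℝ)) * ∏ j ∈ Finset.range k, cseq j) :=
          mul_le_mul_of_nonneg_left hgapb2 (by positivity)
        have h2 : (|B| + ε) * ((1 - cseq k * (nseq k : ℝ)) * ∏ j ∈ Finset.range k, cseq j)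
            < (|A| - ε) * (b3 - a3) := by
          rw [hlen3, Finset.prod_range_succ]
          nlinarith
        linarith
      obtain ⟨x'', hx'', hor2⟩ := hcore2
      have hpick2 : ∃ (j : Fin (nseq k)) (y'' : ℝ),
          y'' ∈ M2.T (k+1) (Fin.snoc τ j) ∧ f (x'', y'') = t := by
        rcases hor2 with h | h
        · obtain ⟨j, hj⟩ := mem_iUnion.mp hαC2
          exact ⟨j, α2, hj, h⟩
        · obtain ⟨j, hj⟩ := mem_iUnion.mp hβC2
          exact ⟨j, β2, hj, h⟩
      obtain ⟨j, y'', hy'', hfy''⟩ := hpick2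
      refine ⟨i, j, ?_⟩
      rw [hGood_def]
      refine ⟨⟨subset_trans hchild1 hsub1, subset_trans (M2.child_subset k τ j) hsub2⟩,
        x'', hI3 ▸ hx'', y'', hy'', hfy''⟩
    -- base case
    have base : Good k0 σ0 τ0 := by
      rw [hGood_def]
      exact ⟨⟨hT1sub, hT2sub⟩, hstart⟩
    -- build the chain
    obtain ⟨F, hGoodF, hnest1, hnest2⟩ :
        ∃ F : ∀ m : ℕ, MoranWord nseq (k0+m) × MoranWord nseq (k0+m),
          (∀ m, Good (k0+m) (F m).1 (F m).2) ∧
          (∀ m, M1.T (k0+m+1) (F (m+1)).1 ⊆ M1.T (k0+m) (F m).1) ∧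
          (∀ m, M2.T (k0+m+1) (F (m+1)).2 ⊆ M2.T (k0+m) (F m).2) := by
      exact
        let G : ∀ m : ℕ, {p : MoranWord nseq (k0+m) × MoranWord nseq (k0+m) //
            Good (k0+m) p.1 p.2} :=
          fun m => Nat.rec ⟨(σ0, τ0), base⟩
            (fun m ih =>
              ⟨(Fin.snoc ih.1.1 (step (k0+m) ih.1.1 ih.1.2 ih.2).choose,
                Fin.snoc ih.1.2 (step (k0+m) ih.1.1 ih.1.2 ih.2).choose_spec.choose),
               (step (k0+m) ih.1.1 ih.1.2 ih.2).choose_spec.choose_spec⟩) m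
        ⟨fun m => (G m).1, fun m => (G m).2,
         fun m => M1.child_subset (k0+m) (G m).1.1 _,
         fun m => M2.child_subset (k0+m) (G m).1.2 _⟩
    -- limits
    have hS1fact : ∀ m, ∃ u v : ℝ, u < v ∧
        v - u = ∏ j ∈ Finset.range (k0+m), cseq j ∧ M1.T (k0+m) (F m).1 = Icc u v :=
      fun m => M1.T_eq_Icc (k0+m) (F m).1
    have hS2fact : ∀ m, ∃ u v : ℝ, u < v ∧
        v - u = ∏ j ∈ Finset.range (k0+m), cseq j ∧ M2.T (k0+m) (F m).2 = Icc u v :=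
      fun m => M2.T_eq_Icc (k0+m) (F m).2
    have hS1c : ∀ m, IsCompact (M1.T (k0+m) (F m).1) := by
      intro m; obtain ⟨u, v, _, _, hI⟩ := hS1fact m; exact hI ▸ isCompact_Icc
    have hS2c : ∀ m, IsCompact (M2.T (k0+m) (F m).2) := by
      intro m; obtain ⟨u, v, _, _, hI⟩ := hS2fact m; exact hI ▸ isCompact_Icc
    have hS1cl : ∀ m, IsClosed (M1.T (k0+m) (F m).1) := by
      intro m; obtain ⟨u, v, _, _, hI⟩ := hS1fact m; exact hI ▸ isClosed_Icc
    have hS2cl : ∀ m, IsClosed (M2.T (k0+m) (F m).2) := by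
      intro m; obtain ⟨u, v, _, _, hI⟩ := hS2fact m; exact hI ▸ isClosed_Icc
    have hS1ne : ∀ m, (M1.T (k0+m) (F m).1).Nonempty := by
      intro m; obtain ⟨u, v, huv, _, hI⟩ := hS1fact m
      exact hI ▸ nonempty_Icc.mpr huv.le
    have hS2ne : ∀ m, (M2.T (k0+m) (F m).2).Nonempty := by
      intro m; obtain ⟨u, v, huv, _, hI⟩ := hS2fact m
      exact hI ▸ nonempty_Icc.mpr huv.le
    obtain ⟨xs, hxs⟩ : (⋂ m, M1.T (k0+m) (F m).1).Nonempty :=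
      IsCompact.nonempty_iInter_of_sequence_nonempty_isCompact_isClosed
        _ hnest1 hS1ne (hS1c 0) hS1cl
    obtain ⟨ys, hys⟩ : (⋂ m, M2.T (k0+m) (F m).2).Nonempty :=
      IsCompact.nonempty_iInter_of_sequence_nonempty_isCompact_isClosed
        _ hnest2 hS2ne (hS2c 0) hS2cl
    have hxs' : ∀ m, xs ∈ M1.T (k0+m) (F m).1 := fun m => mem_iInter.mp hxs m
    have hys' : ∀ m, ys ∈ M2.T (k0+m) (F m).2 := fun m => mem_iInter.mp hys m
    -- the witness points converge to (xs, ys) and carry f = t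
    obtain ⟨P, hP⟩ : ∃ P : ℕ → ℝ × ℝ, ∀ m, (P m).1 ∈ M1.T (k0+m) (F m).1 ∧
        (P m).2 ∈ M2.T (k0+m) (F m).2 ∧ f (P m) = t := by
      have hch : ∀ m, ∃ p : ℝ × ℝ, p.1 ∈ M1.T (k0+m) (F m).1 ∧
          p.2 ∈ M2.T (k0+m) (F m).2 ∧ f p = t := by
        intro m
        have := hGoodF m
        rw [hGood_def] at this
        obtain ⟨_, x, hx, y, hy, hfxy⟩ := this
        exact ⟨(x, y), hx, hy, hfxy⟩
      exact ⟨fun m => (hch m).choose, fun m => (hch m).choose_spec⟩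
    have hdist : ∀ m, dist (P m).1 xs ≤ (1/2 : ℝ)^m ∧ dist (P m).2 ys ≤ (1/2 : ℝ)^m := by
      intro m
      obtain ⟨u, v, huv, hlen, hI⟩ := hS1fact m
      obtain ⟨u', v', huv', hlen', hI'⟩ := hS2fact m
      have hb : (∏ j ∈ Finset.range (k0+m), cseq j) ≤ (1/2 : ℝ)^m := by
        calc (∏ j ∈ Finset.range (k0+m), cseq j) ≤ (1/2 : ℝ)^(k0+m) := hLhalf _
          _ ≤ (1/2 : ℝ)^m := pow_le_pow_of_le_one (by norm_num) (by norm_num)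
              (Nat.le_add_left m k0)
      constructor
      · have h1 := (hP m).1; have h2 := hxs' m
        rw [hI] at h1 h2
        rw [Real.dist_eq, abs_le]
        simp only [mem_Icc] at h1 h2
        constructor <;> [linarith [h1.1, h2.2, hlen ▸ hb]; linarith [h1.2, h2.1, hlen ▸ hb]]
      · have h1 := (hP m).2.1; have h2 := hys' m
        rw [hI'] at h1 h2
        rw [Real.dist_eq, abs_le]
        simp only [mem_Icc] at h1 h2
        constructor <;> [linarith [h1.1, h2.2, hlen' ▸ hb]; linarith [h1.2, h2.1, hlen' ▸ hb]]
    have hhalf_tendsto : Filter.Tendsto (fun m : ℕ => (1/2 : ℝ)^m) Filter.atTop (nhds 0) :=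
      tendsto_pow_atTop_nhds_zero_of_lt_one (by norm_num) (by norm_num)
    have htend1 : Filter.Tendsto (fun m => (P m).1) Filter.atTop (nhds xs) := by
      rw [tendsto_iff_dist_tendsto_zero]
      exact squeeze_zero (fun m => dist_nonneg) (fun m => (hdist m).1) hhalf_tendsto
    have htend2 : Filter.Tendsto (fun m => (P m).2) Filter.atTop (nhds ys) := by
      rw [tendsto_iff_dist_tendsto_zero]
      exact squeeze_zero (fun m => dist_nonneg) (fun m => (hdist m).2) hhalf_tendsto
    have htendP : Filter.Tendsto P Filter.atTop (nhds (xs, ys)) := by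
      rw [nhds_prod_eq]
      exact Filter.Tendsto.prodMk htend1 htend2
    -- (xs, ys) lies in U
    have hxsIx : xs ∈ Ix := by
      have h := hGoodF 0
      rw [hGood_def] at h
      exact h.1.1 (hxs' 0)
    have hysIy : ys ∈ Iy := by
      have h := hGoodF 0
      rw [hGood_def] at h
      exact h.1.2 (hys' 0)
    have hxyU : (xs, ys) ∈ U := hKU (hKeq ▸ (mem_prod.mpr ⟨hxsIx, hysIy⟩))
    have hfc : ContinuousAt f (xs, ys) :=
      (hf.continuousOn.continuousAt (hU.mem_nhds hxyU))
    have hft : f (xs, ys) = t := by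
      have h1 : Filter.Tendsto (fun m => f (P m)) Filter.atTop (nhds (f (xs, ys))) :=
        (hfc.tendsto).comp htendP
      have h2 : Filter.Tendsto (fun m => f (P m)) Filter.atTop (nhds t) := by
        have : (fun m => f (P m)) = fun _ => t := funext fun m => (hP m).2.2
        rw [this]
        exact tendsto_const_nhds
      exact tendsto_nhds_unique h1 h2
    -- membership in the Moran sets
    have hxsE : xs ∈ M1.moranSet := by
      rw [MoranStructure.moranSet]
      rw [mem_iInter]
      intro k
      have hle : k + 1 ≤ k0 + (k + 1) := by omega
      have hx := hxs' (k+1)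
      have := M1.T_trunc_subset (k0+(k+1)) (k+1) hle (F (k+1)).1 hx
      rw [MoranStructure.level]
      exact mem_iUnion.mpr ⟨_, this⟩
    have hysE : ys ∈ M2.moranSet := by
      rw [MoranStructure.moranSet]
      rw [mem_iInter]
      intro k
      have hle : k + 1 ≤ k0 + (k + 1) := by omega
      have hy := hys' (k+1)
      have := M2.T_trunc_subset (k0+(k+1)) (k+1) hle (F (k+1)).2 hy
      rw [MoranStructure.level]
      exact mem_iUnion.mpr ⟨_, this⟩
    exact ⟨(xs, ys), ⟨⟨hxsE, hysE⟩, hxyU⟩, hft⟩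
  -- now produce a nondegenerate interval of values t
  obtain ⟨u0, v0, huv0, hlen0, hI0⟩ := M1.T_eq_Icc k0 σ0
  have hcontx : ContinuousOn (fun u => f (u, y0)) (Icc u0 v0) := by
    have hmap : MapsTo (fun u => ((u, y0) : ℝ × ℝ)) (Icc u0 v0) U := by
      intro w hw
      apply hKU
      rw [← hKeq]
      exact mem_prod.mpr ⟨hT1sub (hI0 ▸ hw), hT2sub hτ0⟩
    exact hf.continuousOn.comp (Continuous.continuousOn (continuous_id.prodMk continuous_const)) hmap
  have hu0 : u0 ∈ Icc u0 v0 := left_mem_Icc.mpr huv0.le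
  have hv0 : v0 ∈ Icc u0 v0 := right_mem_Icc.mpr huv0.le
  have hne0 : f (u0, y0) ≠ f (v0, y0) := by
    intro heq
    have h := Hest u0 (hT1sub (hI0 ▸ hu0)) v0 (hT1sub (hI0 ▸ hv0)) y0 (hT2sub hτ0)
      y0 (hT2sub hτ0)
    simp only [sub_self, mul_zero, add_zero, abs_zero] at h
    rw [heq, max_eq_left (abs_nonneg _)] at h
    have h2 : |f (v0, y0) - f (v0, y0) - A * (v0 - u0)| = |A| * (v0 - u0) := by
      simp only [sub_self, zero_sub, abs_neg, abs_mul]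
      rw [abs_of_pos (by linarith : (0:ℝ) < v0 - u0)]
    rw [h2, abs_of_pos (by linarith : (0:ℝ) < v0 - u0)] at h
    nlinarith
  -- each value in the interval between them is attained
  have himg : uIcc (f (u0, y0)) (f (v0, y0)) ⊆ f '' ((M1.moranSet ×ˢ M2.moranSet) ∩ U) := by
    intro t ht
    apply key t
    have hcu : ContinuousOn (fun u => f (u, y0)) (uIcc u0 v0) := by
      rw [uIcc_of_le huv0.le]; exact hcontx
    obtain ⟨x, hx, hfx⟩ := intermediate_value_uIcc hcu ht
    rw [uIcc_of_le huv0.le] at hx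
    exact ⟨x, hI0 ▸ hx, y0, hτ0, hfx⟩
  -- conclude
  rcases hne0.lt_or_gt with hlt | hlt
  · refine ⟨f (u0, y0) + (f (v0, y0) - f (u0, y0)) / 2, ?_⟩
    apply interior_mono himg
    rw [uIcc_of_le hlt.le, interior_Icc, mem_Ioo]
    constructor <;> linarith
  · refine ⟨f (v0, y0) + (f (u0, y0) - f (v0, y0)) / 2, ?_⟩
    apply interior_mono himg
    rw [uIcc_of_ge hlt.le, interior_Icc, mem_Ioo]
    constructor <;> linarith
end

section
/- Let E1, E2 ∈ (M, c_k, n_k) be Moran sets, with E1 = ⋂_{k≥1} E_k^{(1)} and E2 = ⋂_{k≥1} E_k^{(2)}, where E_k^{(i)} is the union of the rank-k basic intervals of E_i. Let F : ℝ² → ℝ be continuous. Fix k_0 ≥ 1 and let A (resp. B) be the left (resp. right) endpoint of some rank-k_0 basic interval of E1 with A < B, and let C (resp. D) be the left (resp. right) endpoint of some rank-k_0 basic interval of E2 with C < D. For n ≥ k_0 and i ∈ {1,2}, let G_n^{(i)} be the union of all rank-n basic intervals of E_i that are contained in [A,B] (for i = 1) or in [C,D] (for i = 2). Then: (a) E1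 ∩ [A,B] = ⋂_{n≥k_0} G_n^{(1)} and E2 ∩ [C,D] = ⋂_{n≥k_0} G_n^{(2)}; and (b) if for every n ≥ k_0 and all rank-n basic intervals I1 ⊆ G_n^{(1)} and I2 ⊆ G_n^{(2)} one has F(I1 × I2) = F(Ĩ1 × Ĩ2), then F( (E1 ∩ [A,B]) × (E2 ∩ [C,D]) ) = F( G_{k_0}^{(1)} × G_{k_0}^{(2)} ). -/
open Set

/-- `G_n`: the union of all rank-`n` basic intervals of `M` contained in `[A, B]`. -/
def MoranStructure.G {nseq : ℕ → ℕ} {cseq : ℕ → ℝ}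
    (M : MoranStructure nseq cseq) (A B : ℝ) (n : ℕ) : Set ℝ :=
  ⋃ σ : MoranWord nseq n, ⋃ (_ : M.T n σ ⊆ Icc A B), M.T n σ

namespace MoranStructure

variable {nseq : ℕ → ℕ} {cseq : ℕ → ℝ} (M : MoranStructure nseq cseq)

lemma T_subset_init (k : ℕ) (σ : MoranWord nseq (k + 1)) :
    M.T (k + 1) σ ⊆ M.T k (Fin.init σ) := by
  have h := M.child_subset k (Fin.init σ) (σ (Fin.last k))
  convert h using 1
  exact congrArg _ (Fin.snoc_init_self σ).symm

lemma level_antitone : ∀ {m n : ℕ}, m ≤ n → M.level n ⊆ M.level m := by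
  intro m n h
  induction n with
  | zero => simp_all
  | succ n ih =>
    rcases eq_or_lt_of_le h with rfl | h'
    · exact subset_rfl
    · refine subset_trans ?_ (ih (Nat.lt_succ_iff.mp h'))
      intro x hx
      obtain ⟨σ, hσ⟩ := mem_iUnion.mp hx
      exact mem_iUnion.mpr ⟨Fin.init σ, M.T_subset_init n σ hσ⟩

lemma T_nonempty (k : ℕ) (σ : MoranWord nseq k) : (M.T k σ).Nonempty := by
  obtain ⟨x, y, hxy, h⟩ := M.isClosedInterval k σ
  exact h ▸ Set.nonempty_Icc.mpr hxy.le

end MoranStructure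
namespace MoranStructure

variable {nseq : ℕ → ℕ} {cseq : ℕ → ℝ} (M : MoranStructure nseq cseq)

lemma diam_T_pos (hc : ∀ k, 0 < cseq k) (k : ℕ) (σ : MoranWord nseq k) :
    0 < Metric.diam (M.T k σ) := by
  rw [M.diam_T]
  exact Finset.prod_pos (fun j _ => hc j)

lemma interior_disjoint : ∀ (k : ℕ) (σ τ : MoranWord nseq k), σ ≠ τ →
    interior (M.T k σ) ∩ interior (M.T k τ) = ∅ := by
  intro k
  induction k with
  | zero =>
    intro σ τ hστ
    exact absurd (funext fun j => j.elim0) hστ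
  | succ k ih =>
    intro σ τ hστ
    by_cases hinit : Fin.init σ = Fin.init τ
    · have hlast : σ (Fin.last k) ≠ τ (Fin.last k) := by
        intro h
        apply hστ
        have := Fin.snoc_init_self σ
        rw [← Fin.snoc_init_self σ, ← Fin.snoc_init_self τ, hinit, h]
      have h2 := M.disjoint_interiors k (Fin.init σ) (σ (Fin.last k)) (τ (Fin.last k)) hlast
      convert h2 using 4
      · exact congrArg _ (Fin.snoc_init_self σ).symm
      · rw [hinit]; exact congrArg _ (Fin.snoc_init_self τ).symm
    · have h2 := ih (Fin.init σ) (Fin.init τ) hinit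
      apply Set.eq_empty_of_subset_empty
      rw [← h2]
      exact Set.inter_subset_inter (interior_mono (M.T_subset_init k σ))
        (interior_mono (M.T_subset_init k τ))

lemma T_closed (k : ℕ) (σ : MoranWord nseq k) : IsClosed (M.T k σ) := by
  obtain ⟨x, y, _, h⟩ := M.isClosedInterval k σ
  rw [h]; exact isClosed_Icc

lemma T_bddBelow (k : ℕ) (σ : MoranWord nseq k) : BddBelow (M.T k σ) := by
  obtain ⟨x, y, _, h⟩ := M.isClosedInterval k σ
  rw [h]; exact bddBelow_Icc

lemma T_bddAbove (k : ℕ) (σ : MoranWord nseq k) : BddAbove (M.T k σ) := by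
  obtain ⟨x, y, _, h⟩ := M.isClosedInterval k σ
  rw [h]; exact bddAbove_Icc

/-- The least point of a basic interval is the least point of one of its children. -/
lemma exists_child_least (hn : ∀ k, 2 ≤ nseq k) (k : ℕ) (σ : MoranWord nseq k) (a : ℝ)
    (ha : IsLeast (M.T k σ) a) :
    ∃ i : Fin (nseq k), IsLeast (M.T (k + 1) (Fin.snoc σ i)) a := by
  set S : Set ℝ := ⋃ i : Fin (nseq k), M.T (k + 1) (Fin.snoc σ i) with hS
  have hSsub : S ⊆ M.T k σ := iUnion_subset fun i => M.child_subset k σ i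
  have hne : Nonempty (Fin (nseq k)) := ⟨⟨0, by have := hn k; omega⟩⟩
  have hSne : S.Nonempty := by
    obtain ⟨i⟩ := hne
    obtain ⟨x, hx⟩ := M.T_nonempty (k + 1) (Fin.snoc σ i)
    exact ⟨x, mem_iUnion.mpr ⟨i, hx⟩⟩
  have hSclosed : IsClosed S := isClosed_iUnion_of_finite fun i => M.T_closed _ _
  have hSbdd : BddBelow S := (M.T_bddBelow k σ).mono hSsub
  have hSbdd' : BddAbove S := (M.T_bddAbove k σ).mono hSsub
  have hinf : sInf S ∈ S := hSclosed.csInf_mem hSne hSbdd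
  have h1 : a ≤ sInf S := le_csInf hSne fun x hx => ha.2 (hSsub hx)
  have h2 : sInf S ≤ a := by
    have hhull : a ∈ convexHull ℝ S := by rw [hS, M.hull]; exact ha.1
    have : convexHull ℝ S ⊆ Icc (sInf S) (sSup S) :=
      convexHull_min (fun x hx => ⟨csInf_le hSbdd hx, le_csSup hSbdd' hx⟩) (convex_Icc _ _)
    exact (this hhull).1
  have heq : sInf S = a := le_antisymm h2 h1
  rw [heq] at hinf
  obtain ⟨i, hi⟩ := mem_iUnion.mp hinf
  exact ⟨i, hi, fun x hx => ha.2 (hSsub (mem_iUnion.mpr ⟨i, hx⟩))⟩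

lemma exists_child_greatest (hn : ∀ k, 2 ≤ nseq k) (k : ℕ) (σ : MoranWord nseq k) (b : ℝ)
    (hb : IsGreatest (M.T k σ) b) :
    ∃ i : Fin (nseq k), IsGreatest (M.T (k + 1) (Fin.snoc σ i)) b := by
  set S : Set ℝ := ⋃ i : Fin (nseq k), M.T (k + 1) (Fin.snoc σ i) with hS
  have hSsub : S ⊆ M.T k σ := iUnion_subset fun i => M.child_subset k σ i
  have hne : Nonempty (Fin (nseq k)) := ⟨⟨0, by have := hn k; omega⟩⟩
  have hSne : S.Nonempty := by
    obtain ⟨i⟩ := hne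
    obtain ⟨x, hx⟩ := M.T_nonempty (k + 1) (Fin.snoc σ i)
    exact ⟨x, mem_iUnion.mpr ⟨i, hx⟩⟩
  have hSclosed : IsClosed S := isClosed_iUnion_of_finite fun i => M.T_closed _ _
  have hSbdd : BddBelow S := (M.T_bddBelow k σ).mono hSsub
  have hSbdd' : BddAbove S := (M.T_bddAbove k σ).mono hSsub
  have hsup : sSup S ∈ S := hSclosed.csSup_mem hSne hSbdd'
  have h1 : sSup S ≤ b := csSup_le hSne fun x hx => hb.2 (hSsub hx)
  have h2 : b ≤ sSup S := by
    have hhull : b ∈ convexHull ℝ S := by rw [hS, M.hull]; exact hb.1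
    have : convexHull ℝ S ⊆ Icc (sInf S) (sSup S) :=
      convexHull_min (fun x hx => ⟨csInf_le hSbdd hx, le_csSup hSbdd' hx⟩) (convex_Icc _ _)
    exact (this hhull).2
  have heq : sSup S = b := le_antisymm h1 h2
  rw [heq] at hsup
  obtain ⟨i, hi⟩ := mem_iUnion.mp hsup
  exact ⟨i, hi, fun x hx => hb.2 (hSsub (mem_iUnion.mpr ⟨i, hx⟩))⟩

/-- Chains of basic intervals containing the least point. -/
lemma exists_least_chain (hn : ∀ k, 2 ≤ nseq k) (k0 : ℕ) (σ0 : MoranWord nseq k0) (a : ℝ)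
    (ha : IsLeast (M.T k0 σ0) a) :
    ∀ n, k0 ≤ n → ∃ τ : MoranWord nseq n, IsLeast (M.T n τ) a ∧ M.T n τ ⊆ M.T k0 σ0 := by
  intro n hn'
  induction n, hn' using Nat.le_induction with
  | base => exact ⟨σ0, ha, subset_rfl⟩
  | succ n hkn ih =>
    obtain ⟨τ, hτ1, hτ2⟩ := ih
    obtain ⟨i, hi⟩ := M.exists_child_least hn n τ a hτ1
    exact ⟨Fin.snoc τ i, hi, (M.child_subset n τ i).trans hτ2⟩

lemma exists_greatest_chain (hn : ∀ k, 2 ≤ nseq k) (k0 : ℕ) (σ0 : MoranWord nseq k0) (b : ℝ)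
    (hb : IsGreatest (M.T k0 σ0) b) :
    ∀ n, k0 ≤ n → ∃ τ : MoranWord nseq n, IsGreatest (M.T n τ) b ∧ M.T n τ ⊆ M.T k0 σ0 := by
  intro n hn'
  induction n, hn' using Nat.le_induction with
  | base => exact ⟨σ0, hb, subset_rfl⟩
  | succ n hkn ih =>
    obtain ⟨τ, hτ1, hτ2⟩ := ih
    obtain ⟨i, hi⟩ := M.exists_child_greatest hn n τ b hτ1
    exact ⟨Fin.snoc τ i, hi, (M.child_subset n τ i).trans hτ2⟩

end MoranStructure
/-- Restriction of a word to a shorter rank. -/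
def MoranWord.restrict {nseq : ℕ → ℕ} {m n : ℕ} (h : m ≤ n) (σ : MoranWord nseq n) :
    MoranWord nseq m := fun j => σ (Fin.castLE h j)

namespace MoranStructure

variable {nseq : ℕ → ℕ} {cseq : ℕ → ℝ} (M : MoranStructure nseq cseq)

lemma T_subset_restrict {m : ℕ} : ∀ n (h : m ≤ n) (σ : MoranWord nseq n),
    M.T n σ ⊆ M.T m (MoranWord.restrict h σ) := by
  intro n h
  induction n, h using Nat.le_induction with
  | base =>
    intro σ
    have : MoranWord.restrict le_rfl σ = σ := by
      funext j
      rfl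
    rw [this]
  | succ n hkn ih =>
    intro σ
    refine (M.T_subset_init n σ).trans ?_
    have : MoranWord.restrict hkn (Fin.init σ) =
        MoranWord.restrict (hkn.trans (Nat.le_succ n)) σ := by
      funext j
      show σ (Fin.castSucc (Fin.castLE hkn j)) = σ (Fin.castLE _ j)
      rfl
    rw [← this]
    exact ih (Fin.init σ)

lemma T_subset_unitInterval : ∀ (k : ℕ) (σ : MoranWord nseq k), M.T k σ ⊆ Icc (0:ℝ) 1 := by
  intro k σ
  refine (M.T_subset_restrict k (Nat.zero_le k) σ).trans ?_
  have : MoranWord.restrict (Nat.zero_le k) σ = fun j => j.elim0 := by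
    funext j; exact j.elim0
  rw [this, M.root]

end MoranStructure

/-- Two nondegenerate closed intervals of equal length with disjoint interiors:
if the first starts strictly to the left, it ends before the second starts. -/
lemma Icc_separation {a b a' b' : ℝ} (hab : a < b) (hab' : a' < b')
    (hlen : b - a = b' - a') (hdisj : Ioo a b ∩ Ioo a' b' = ∅) (h : a < a') : b ≤ a' := by
  by_contra hcon
  push_neg at hcon
  have h1 : a' < min b b' := lt_min hcon hab'
  have : (a' + min b b') / 2 ∈ Ioo a b ∩ Ioo a' b' := by
    constructor
    · constructor
      · nlinarith [min_le_left b b', min_le_right b b']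
      · nlinarith [min_le_left b b', min_le_right b b']
    · constructor
      · linarith
      · nlinarith [min_le_left b b', min_le_right b b']
  rw [hdisj] at this
  exact this
namespace MoranStructure

variable {nseq : ℕ → ℕ} {cseq : ℕ → ℝ} (M : MoranStructure nseq cseq)

/-- Representation of a basic interval via its least element. -/
lemma eq_Icc_of_isLeast (hc : ∀ k, 0 < cseq k) {k : ℕ} {σ : MoranWord nseq k} {a : ℝ}
    (ha : IsLeast (M.T k σ) a) :
    M.T k σ = Icc a (a + ∏ j ∈ Finset.range k, cseq j) := by
  obtain ⟨x, y, hxy, h⟩ := M.isClosedInterval k σ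
  have hax : a = x := ha.unique (h ▸ isLeast_Icc hxy.le)
  have hd : y - x = ∏ j ∈ Finset.range k, cseq j := by
    have := M.diam_T k σ
    rwa [h, Real.diam_Icc hxy.le] at this
  rw [h, hax]
  exact congrArg (Icc x) (by linarith)

lemma eq_Icc_of_isGreatest (hc : ∀ k, 0 < cseq k) {k : ℕ} {σ : MoranWord nseq k} {b : ℝ}
    (hb : IsGreatest (M.T k σ) b) :
    M.T k σ = Icc (b - ∏ j ∈ Finset.range k, cseq j) b := by
  obtain ⟨x, y, hxy, h⟩ := M.isClosedInterval k σ
  have hby : b = y := hb.unique (h ▸ isGreatest_Icc hxy.le)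
  have hd : y - x = ∏ j ∈ Finset.range k, cseq j := by
    have := M.diam_T k σ
    rwa [h, Real.diam_Icc hxy.le] at this
  rw [h, hby]
  exact congrArg (fun t => Icc t y) (by linarith)

/-- Part (a), for a single Moran structure. -/
lemma part_a (hn : ∀ k, 2 ≤ nseq k) (hc : ∀ k, 0 < cseq k)
    (k0 : ℕ) (hk0 : 1 ≤ k0) (A B : ℝ) (hAB : A < B)
    (σA : MoranWord nseq k0) (hA : IsLeast (M.T k0 σA) A)
    (σB : MoranWord nseq k0) (hB : IsGreatest (M.T k0 σB) B) :
    M.moranSet ∩ Icc A B = ⋂ n, ⋂ (_ : k0 ≤ n), M.G A B n := by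
  set L : ℝ := ∏ j ∈ Finset.range k0, cseq j with hL
  have hLpos : 0 < L := Finset.prod_pos fun j _ => hc j
  have hTA : M.T k0 σA = Icc A (A + L) := M.eq_Icc_of_isLeast hc hA
  have hTB : M.T k0 σB = Icc (B - L) B := M.eq_Icc_of_isGreatest hc hB
  -- T σA and T σB are contained in [A, B]
  have hsubA : M.T k0 σA ⊆ Icc A B ∧ M.T k0 σB ⊆ Icc A B := by
    by_cases hσ : σA = σB
    · have hEq : Icc A (A + L) = Icc (B - L) B := by rw [← hTA, hσ, hTB]
      have h2 : IsLeast (Icc A (A + L)) (B - L) := by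
        rw [hEq]; exact isLeast_Icc (by linarith)
      have h1 : A = B - L := (isLeast_Icc (by linarith : A ≤ A + L)).unique h2
      constructor
      · rw [hTA]; intro z hz; exact ⟨hz.1, by linarith [hz.2]⟩
      · rw [hσ] at hTA; rw [hTA]; intro z hz; exact ⟨hz.1, by linarith [hz.2]⟩
    · have hdisj := M.interior_disjoint k0 σA σB hσ
      rw [hTA, hTB, interior_Icc, interior_Icc] at hdisj
      rcases lt_trichotomy A (B - L) with h | h | h
      · have hsep : A + L ≤ B - L :=
          Icc_separation (by linarith) (by linarith) (by ring) hdisj h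
        constructor
        · rw [hTA]; intro z hz; exact ⟨hz.1, by linarith [hz.2]⟩
        · rw [hTB]; intro z hz; exact ⟨by linarith [hz.1], hz.2⟩
      · exfalso
        have hmid : A + L / 2 ∈ Ioo A (A + L) ∩ Ioo (B - L) B :=
          ⟨⟨by linarith, by linarith⟩, ⟨by linarith, by linarith⟩⟩
        rw [hdisj] at hmid
        exact hmid
      · exfalso
        have hsep : B ≤ A :=
          Icc_separation (a := B - L) (b := B) (a' := A) (b' := A + L) (by linarith)
            (by linarith) (by ring) (by rw [Set.inter_comm]; exact hdisj) h
        linarith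
  -- the key claim
  have key : ∀ n, k0 ≤ n → ∀ x, x ∈ Icc A B → x ∈ M.level n → x ∈ M.G A B n := by
    intro n hkn x hxAB hxl
    by_cases hxA : x = A
    · obtain ⟨τ, hτ1, hτ2⟩ := M.exists_least_chain hn k0 σA A hA n hkn
      exact mem_iUnion.mpr ⟨τ, mem_iUnion.mpr ⟨hτ2.trans hsubA.1, hxA ▸ hτ1.1⟩⟩
    by_cases hxB : x = B
    · obtain ⟨τ, hτ1, hτ2⟩ := M.exists_greatest_chain hn k0 σB B hB n hkn
      exact mem_iUnion.mpr ⟨τ, mem_iUnion.mpr ⟨hτ2.trans hsubA.2, hxB ▸ hτ1.1⟩⟩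
    have hxA' : A < x := lt_of_le_of_ne hxAB.1 (Ne.symm hxA)
    have hxB' : x < B := lt_of_le_of_ne hxAB.2 hxB
    obtain ⟨σ, hσ⟩ := mem_iUnion.mp hxl
    set ρ := MoranWord.restrict hkn σ with hρ
    have hxJ : x ∈ M.T k0 ρ := M.T_subset_restrict n hkn σ hσ
    obtain ⟨a, b, hab, hJ⟩ := M.isClosedInterval k0 ρ
    have hba : b - a = L := by
      have := M.diam_T k0 ρ
      rwa [hJ, Real.diam_Icc hab.le] at this
    rw [hJ] at hxJ
    have hAa : A ≤ a := by
      by_contra hcon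
      push_neg at hcon
      have hρA : ρ ≠ σA := by
        intro h
        have : a = A := (isLeast_Icc hab.le).unique (hJ ▸ h ▸ hA)
        linarith
      have hdisj := M.interior_disjoint k0 ρ σA hρA
      rw [hJ, hTA, interior_Icc, interior_Icc] at hdisj
      have : b ≤ A := Icc_separation hab (by linarith) (by linarith) hdisj hcon
      linarith [hxJ.2]
    have hbB : b ≤ B := by
      by_contra hcon
      push_neg at hcon
      have hρB : ρ ≠ σB := by
        intro h
        have : b = B := (isGreatest_Icc hab.le).unique (hJ ▸ h ▸ hB)
        linarith
      have hdisj := M.interior_disjoint k0 ρ σB hρB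
      rw [hJ, hTB, interior_Icc, interior_Icc] at hdisj
      rcases lt_trichotomy a (B - L) with h | h | h
      · have : b ≤ B - L := Icc_separation hab (by linarith) (by linarith) hdisj h
        linarith
      · linarith
      · have : B ≤ a := Icc_separation (a := B - L) (b := B) (a' := a) (b' := b)
          (by linarith) hab (by linarith) (by rw [Set.inter_comm]; exact hdisj) h
        linarith [hxJ.1]
    have hsub : M.T n σ ⊆ Icc A B := by
      refine (M.T_subset_restrict n hkn σ).trans ?_
      rw [hJ]
      exact Icc_subset_Icc hAa hbB
    exact mem_iUnion.mpr ⟨σ, mem_iUnion.mpr ⟨hsub, hσ⟩⟩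
  -- assemble
  apply Set.Subset.antisymm
  · intro x hx
    simp only [mem_iInter]
    intro n hkn
    have hx1 : x ∈ M.level n := by
      obtain ⟨m, rfl⟩ : ∃ m, n = m + 1 := ⟨n - 1, by omega⟩
      exact mem_iInter.mp hx.1 m
    exact key n hkn x hx.2 hx1
  · intro x hx
    simp only [mem_iInter] at hx
    have hxAB : x ∈ Icc A B := by
      obtain ⟨σ, hσ⟩ := mem_iUnion.mp (hx k0 le_rfl)
      obtain ⟨hsub, hmem⟩ := mem_iUnion.mp hσ
      exact hsub hmem
    refine ⟨mem_iInter.mpr fun k => ?_, hxAB⟩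
    have h1 : x ∈ M.level (max (k + 1) k0) := by
      obtain ⟨σ, hσ⟩ := mem_iUnion.mp (hx (max (k + 1) k0) (le_max_right _ _))
      obtain ⟨_, hmem⟩ := mem_iUnion.mp hσ
      exact mem_iUnion.mpr ⟨σ, hmem⟩
    exact M.level_antitone (le_max_left _ _) h1

end MoranStructure
section Construction

variable {nseq : ℕ → ℕ} {cseq : ℕ → ℝ} (M1 M2 : MoranStructure nseq cseq)
  (F : ℝ × ℝ → ℝ) (A B C D : ℝ) (k0 : ℕ) (x y : ℝ)

/-- The state at stage `m` of the recursive construction in part (b). -/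
def MoranState (m : ℕ) : Type :=
  {q : MoranWord nseq (k0 + m) × MoranWord nseq (k0 + m) × ℝ × ℝ //
    M1.T (k0 + m) q.1 ⊆ Icc A B ∧ M2.T (k0 + m) q.2.1 ⊆ Icc C D ∧
    q.2.2.1 ∈ M1.T (k0 + m) q.1 ∧ q.2.2.2 ∈ M2.T (k0 + m) q.2.1 ∧
    F q.2.2 = F (x, y)}

variable {M1 M2 F A B C D k0 x y}

lemma moranStep_ex
    (H : ∀ n, k0 ≤ n → ∀ (σ : MoranWord nseq n) (τ : MoranWord nseq n),
        M1.T n σ ⊆ Icc A B → M2.T n τ ⊆ Icc C D →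
        F '' (M1.T n σ ×ˢ M2.T n τ) = F '' (M1.tilde n σ ×ˢ M2.tilde n τ))
    (m : ℕ) (s : MoranState M1 M2 F A B C D k0 x y m) :
    ∃ s' : MoranState M1 M2 F A B C D k0 x y (m + 1),
      M1.T (k0 + (m + 1)) s'.1.1 ⊆ M1.T (k0 + m) s.1.1 ∧
      M2.T (k0 + (m + 1)) s'.1.2.1 ⊆ M2.T (k0 + m) s.1.2.1 := by
  obtain ⟨⟨σ, τ, u, v⟩, hσsub, hτsub, hu, hv, hFuv⟩ := s
  have himg := H (k0 + m) (Nat.le_add_right _ _) σ τ hσsub hτsub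
  have hmem : F (u, v) ∈ F '' (M1.T (k0 + m) σ ×ˢ M2.T (k0 + m) τ) :=
    ⟨(u, v), Set.mk_mem_prod hu hv, rfl⟩
  rw [himg] at hmem
  obtain ⟨⟨u', v'⟩, hmem', hFeq⟩ := hmem
  obtain ⟨hu', hv'⟩ := hmem'
  obtain ⟨i, hi⟩ := Set.mem_iUnion.mp hu'
  obtain ⟨j, hj⟩ := Set.mem_iUnion.mp hv'
  refine ⟨⟨⟨Fin.snoc σ i, Fin.snoc τ j, u', v'⟩,
      (M1.child_subset _ σ i).trans hσsub, (M2.child_subset _ τ j).trans hτsub,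
      hi, hj, hFeq.trans hFuv⟩,
    M1.child_subset _ σ i, M2.child_subset _ τ j⟩

variable (H : ∀ n, k0 ≤ n → ∀ (σ : MoranWord nseq n) (τ : MoranWord nseq n),
        M1.T n σ ⊆ Icc A B → M2.T n τ ⊆ Icc C D →
        F '' (M1.T n σ ×ˢ M2.T n τ) = F '' (M1.tilde n σ ×ˢ M2.tilde n τ))
  (base : MoranState M1 M2 F A B C D k0 x y 0)

/-- The recursively constructed chain of states. -/
noncomputable def moranChain : ∀ m, MoranState M1 M2 F A B C D k0 x y m
  | 0 => base
  | m + 1 => (moranStep_ex H m (moranChain m)).choose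

lemma moranChain_nested (m : ℕ) :
    M1.T (k0 + (m + 1)) (moranChain H base (m + 1)).1.1 ⊆
      M1.T (k0 + m) (moranChain H base m).1.1 ∧
    M2.T (k0 + (m + 1)) (moranChain H base (m + 1)).1.2.1 ⊆
      M2.T (k0 + m) (moranChain H base m).1.2.1 :=
  (moranStep_ex H m (moranChain H base m)).choose_spec

end Construction
lemma prod_cseq_le {nseq : ℕ → ℕ} {cseq : ℕ → ℝ}
    (hn : ∀ k, 2 ≤ nseq k) (hc : ∀ k, 0 < cseq k) (hcn : ∀ k, cseq k * (nseq k : ℝ) < 1)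
    (n : ℕ) : ∏ j ∈ Finset.range n, cseq j ≤ (1/2) ^ n := by
  rw [show ((1:ℝ)/2) ^ n = ∏ _j ∈ Finset.range n, (1/2 : ℝ) by
    rw [Finset.prod_const, Finset.card_range]]
  refine Finset.prod_le_prod (fun j _ => (hc j).le) (fun j _ => ?_)
  have h2 : (2 : ℝ) ≤ (nseq j : ℝ) := by exact_mod_cast hn j
  nlinarith [hc j, hcn j]

lemma part_b {nseq : ℕ → ℕ} {cseq : ℕ → ℝ}
    (M1 M2 : MoranStructure nseq cseq)
    (hn : ∀ k, 2 ≤ nseq k) (hc : ∀ k, 0 < cseq k) (hcn : ∀ k, cseq k * (nseq k : ℝ) < 1)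
    (F : ℝ × ℝ → ℝ) (hF : Continuous F) (k0 : ℕ) (A B C D : ℝ)
    (H : ∀ n, k0 ≤ n → ∀ (σ : MoranWord nseq n) (τ : MoranWord nseq n),
        M1.T n σ ⊆ Icc A B → M2.T n τ ⊆ Icc C D →
        F '' (M1.T n σ ×ˢ M2.T n τ) = F '' (M1.tilde n σ ×ˢ M2.tilde n τ)) :
    F '' (M1.G A B k0 ×ˢ M2.G C D k0) ⊆
      F '' ((M1.moranSet ∩ Icc A B) ×ˢ (M2.moranSet ∩ Icc C D)) := by
  rintro z ⟨⟨x, y⟩, ⟨hx, hy⟩, rfl⟩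
  obtain ⟨σ0, h0⟩ := mem_iUnion.mp hx
  obtain ⟨hσ0sub, hxσ0⟩ := mem_iUnion.mp h0
  obtain ⟨τ0, h1⟩ := mem_iUnion.mp hy
  obtain ⟨hτ0sub, hyτ0⟩ := mem_iUnion.mp h1
  let base : MoranState M1 M2 F A B C D k0 x y 0 :=
    ⟨⟨σ0, τ0, x, y⟩, hσ0sub, hτ0sub, hxσ0, hyτ0, rfl⟩
  let ch := moranChain H base
  let I1 : ℕ → Set ℝ := fun m => M1.T (k0 + m) (ch m).1.1
  let I2 : ℕ → Set ℝ := fun m => M2.T (k0 + m) (ch m).1.2.1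
  let u : ℕ → ℝ := fun m => (ch m).1.2.2.1
  let v : ℕ → ℝ := fun m => (ch m).1.2.2.2
  have hnest1 : ∀ m, I1 (m + 1) ⊆ I1 m := fun m => (moranChain_nested H base m).1
  have hnest2 : ∀ m, I2 (m + 1) ⊆ I2 m := fun m => (moranChain_nested H base m).2
  have hsubAB : ∀ m, I1 m ⊆ Icc A B := fun m => (ch m).2.1
  have hsubCD : ∀ m, I2 m ⊆ Icc C D := fun m => (ch m).2.2.1
  have hum : ∀ m, u m ∈ I1 m := fun m => (ch m).2.2.2.1
  have hvm : ∀ m, v m ∈ I2 m := fun m => (ch m).2.2.2.2.1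
  have hconst : ∀ m, F (u m, v m) = F (x, y) := fun m => (ch m).2.2.2.2.2
  -- common points
  have hcompact : ∀ (M : MoranStructure nseq cseq) (k : ℕ) (σ : MoranWord nseq k),
      IsCompact (M.T k σ) := by
    intro M k σ
    obtain ⟨a, b, _, hEq⟩ := M.isClosedInterval k σ
    rw [hEq]; exact isCompact_Icc
  have hne1 : (⋂ m, I1 m).Nonempty :=
    IsCompact.nonempty_iInter_of_sequence_nonempty_isCompact_isClosed I1 hnest1
      (fun m => M1.T_nonempty _ _) (hcompact M1 _ _) (fun m => M1.T_closed _ _)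
  have hne2 : (⋂ m, I2 m).Nonempty :=
    IsCompact.nonempty_iInter_of_sequence_nonempty_isCompact_isClosed I2 hnest2
      (fun m => M2.T_nonempty _ _) (hcompact M2 _ _) (fun m => M2.T_closed _ _)
  obtain ⟨xs, hxs⟩ := hne1
  obtain ⟨ys, hys⟩ := hne2
  have hxsm : ∀ m, xs ∈ I1 m := mem_iInter.mp hxs
  have hysm : ∀ m, ys ∈ I2 m := mem_iInter.mp hys
  -- diameter bound and convergence
  have hdiam : ∀ (M : MoranStructure nseq cseq) (m : ℕ) (σ : MoranWord nseq (k0 + m)),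
      Metric.diam (M.T (k0 + m) σ) ≤ (1/2) ^ m := by
    intro M m σ
    rw [M.diam_T]
    calc ∏ j ∈ Finset.range (k0 + m), cseq j ≤ (1/2) ^ (k0 + m) :=
          prod_cseq_le hn hc hcn _
      _ ≤ (1/2) ^ m := pow_le_pow_of_le_one (by norm_num) (by norm_num) (Nat.le_add_left _ _)
  have hdist1 : ∀ m, dist (u m) xs ≤ (1/2) ^ m := fun m =>
    (Metric.dist_le_diam_of_mem ((Metric.isBounded_Icc A B).subset (hsubAB m))
      (hum m) (hxsm m)).trans (hdiam M1 m _)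
  have hdist2 : ∀ m, dist (v m) ys ≤ (1/2) ^ m := fun m =>
    (Metric.dist_le_diam_of_mem ((Metric.isBounded_Icc C D).subset (hsubCD m))
      (hvm m) (hysm m)).trans (hdiam M2 m _)
  have hhalf : Filter.Tendsto (fun m : ℕ => ((1:ℝ)/2) ^ m) Filter.atTop (nhds 0) :=
    tendsto_pow_atTop_nhds_zero_of_lt_one (by norm_num) (by norm_num)
  have hu_t : Filter.Tendsto u Filter.atTop (nhds xs) :=
    tendsto_iff_dist_tendsto_zero.mpr (squeeze_zero (fun m => dist_nonneg) hdist1 hhalf)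
  have hv_t : Filter.Tendsto v Filter.atTop (nhds ys) :=
    tendsto_iff_dist_tendsto_zero.mpr (squeeze_zero (fun m => dist_nonneg) hdist2 hhalf)
  have hFt : Filter.Tendsto (fun m => F (u m, v m)) Filter.atTop (nhds (F (xs, ys))) :=
    (hF.tendsto _).comp (hu_t.prodMk_nhds hv_t)
  rw [show (fun m => F (u m, v m)) = (fun _ : ℕ => F (x, y)) from funext hconst] at hFt
  have hFeq : F (xs, ys) = F (x, y) := tendsto_nhds_unique hFt tendsto_const_nhds
  -- membership
  have hxsE : xs ∈ M1.moranSet ∩ Icc A B := by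
    refine ⟨mem_iInter.mpr fun k => ?_, hsubAB 0 (hxsm 0)⟩
    exact M1.level_antitone (by omega : k + 1 ≤ k0 + (k + 1))
      (mem_iUnion.mpr ⟨(ch (k + 1)).1.1, hxsm (k + 1)⟩)
  have hysE : ys ∈ M2.moranSet ∩ Icc C D := by
    refine ⟨mem_iInter.mpr fun k => ?_, hsubCD 0 (hysm 0)⟩
    exact M2.level_antitone (by omega : k + 1 ≤ k0 + (k + 1))
      (mem_iUnion.mpr ⟨(ch (k + 1)).1.2.1, hysm (k + 1)⟩)
  exact ⟨(xs, ys), Set.mk_mem_prod hxsE hysE, hFeq⟩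

/-- **Lemma 2.1.**  Let `E1, E2` be Moran sets, `F : ℝ² → ℝ` continuous,
`A` (resp. `B`) the left (resp. right) endpoint of some rank-`k0` basic interval of `E1`
with `A < B`, and `C, D` likewise for `E2`.  With `G_n^{(i)}` the union of the rank-`n`
basic intervals contained in `[A,B]` (resp. `[C,D]`):
(a) `E1 ∩ [A,B] = ⋂_{n ≥ k0} G_n^{(1)}` and `E2 ∩ [C,D] = ⋂_{n ≥ k0} G_n^{(2)}`;
(b) if `F(I1 × I2) = F(Ĩ1 × Ĩ2)` for all rank-`n` basic intervals `I1 ⊆ G_n^{(1)}`,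
`I2 ⊆ G_n^{(2)}` with `n ≥ k0`, then
`F((E1 ∩ [A,B]) × (E2 ∩ [C,D])) = F(G_{k0}^{(1)} × G_{k0}^{(2)})`. -/
theorem moran_intersection_G_and_image
    (nseq : ℕ → ℕ) (cseq : ℕ → ℝ)
    (hn : ∀ k, 2 ≤ nseq k) (hc : ∀ k, 0 < cseq k)
    (hcn : ∀ k, cseq k * (nseq k : ℝ) < 1)
    (M1 M2 : MoranStructure nseq cseq)
    (F : ℝ × ℝ → ℝ) (hF : Continuous F)
    (k0 : ℕ) (hk0 : 1 ≤ k0)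
    (A B C D : ℝ) (hAB : A < B) (hCD : C < D)
    (σA : MoranWord nseq k0) (hA : IsLeast (M1.T k0 σA) A)
    (σB : MoranWord nseq k0) (hB : IsGreatest (M1.T k0 σB) B)
    (σC : MoranWord nseq k0) (hC : IsLeast (M2.T k0 σC) C)
    (σD : MoranWord nseq k0) (hD : IsGreatest (M2.T k0 σD) D) :
    (M1.moranSet ∩ Icc A B = ⋂ n, ⋂ (_ : k0 ≤ n), M1.G A B n) ∧
    (M2.moranSet ∩ Icc C D = ⋂ n, ⋂ (_ : k0 ≤ n), M2.G C D n) ∧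
    ((∀ n, k0 ≤ n → ∀ (σ : MoranWord nseq n) (τ : MoranWord nseq n),
        M1.T n σ ⊆ Icc A B → M2.T n τ ⊆ Icc C D →
        F '' (M1.T n σ ×ˢ M2.T n τ) = F '' (M1.tilde n σ ×ˢ M2.tilde n τ)) →
      F '' ((M1.moranSet ∩ Icc A B) ×ˢ (M2.moranSet ∩ Icc C D)) =
        F '' (M1.G A B k0 ×ˢ M2.G C D k0)) := by
  have ha1 := M1.part_a hn hc k0 hk0 A B hAB σA hA σB hB
  have ha2 := M2.part_a hn hc k0 hk0 C D hCD σC hC σD hD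
  refine ⟨ha1, ha2, fun H => ?_⟩
  apply Set.Subset.antisymm
  · apply Set.image_mono
    apply Set.prod_mono
    · rw [ha1]
      exact iInter_subset_of_subset k0 (iInter_subset _ le_rfl)
    · rw [ha2]
      exact iInter_subset_of_subset k0 (iInter_subset _ le_rfl)
  · exact part_b M1 M2 hn hc hcn F hF k0 A B C D H
end

section
/- Let E1, E2 ∈ (M, c_k, n_k) be Moran sets, let U ⊆ ℝ² be open and let f : U → ℝ be continuously differentiable. Fix k ≥ 1, let I = [a, a+t] be a rank-(k−1) basic interval of E1 and J = [b, b+t] a rank-(k−1) basic interval of E2 (so t = c_1 ⋯ c_{k−1}, with t = 1 when k = 1), and assume I × J ⊆ U. Suppose that on all of I × J the partial derivatives ∂_x f and ∂_y f are nonvanishing with constant signs, and that for every (x, y) ∈ I × J, sup_{j≥1} (1 − c_j n_j) < |∂_y f(x, y) / ∂_x f(x, y)| < inf_{j≥1} ( c_j / (1 − n_j c_j) ). Then f(I × J) = f(Ĩ × J̃), where Ĩ = ⋃_{i=1}^{n_k} I_i and J̃ = ⋃_{j=1}^{n_k} J_j are the unions of the rank-k children of I and J respectively. -/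
set_option maxHeartbeats 1000000


open Set

lemma nat_transition (P : ℕ → Prop) (m₁ m₂ : ℕ) (h1 : P m₁) (h2 : ¬ P m₂) (hle : m₁ ≤ m₂) :
    ∃ k, m₁ ≤ k ∧ k < m₂ ∧ P k ∧ ¬ P (k + 1) := by
  by_contra h
  push_neg at h
  apply h2
  have key : ∀ m, m₁ ≤ m → m ≤ m₂ → P m := by
    intro m hm
    induction m, hm using Nat.le_induction with
    | base => intro _; exact h1
    | succ nn hnn ih =>
      intro hn2
      exact h nn hnn (by omega) (ih (by omega))
  exact key m₂ hle le_rfl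

lemma grid_helper (f : ℝ × ℝ → ℝ) (a b t ct g0 : ℝ) (n : ℕ) (hn1 : 0 < n)
    (hct : 0 < ct) (hg0 : 0 ≤ g0)
    (p q : Fin n → ℝ)
    (hp0 : p ⟨0, hn1⟩ = a) (hpl : p ⟨n - 1, by omega⟩ + ct = a + t)
    (hq0 : q ⟨0, hn1⟩ = b) (hql : q ⟨n - 1, by omega⟩ + ct = b + t)
    (hpm : ∀ i j : Fin n, (i : ℕ) < (j : ℕ) → p i + ct ≤ p j)
    (hqm : ∀ i j : Fin n, (i : ℕ) < (j : ℕ) → q i + ct ≤ q j)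
    (hpg : ∀ i j : Fin n, (i : ℕ) + 1 = (j : ℕ) → p j - (p i + ct) ≤ g0)
    (hqg : ∀ i j : Fin n, (i : ℕ) + 1 = (j : ℕ) → q j - (q i + ct) ≤ g0)
    (hcont : ContinuousOn f (Icc a (a + t) ×ˢ Icc b (b + t)))
    (hmvt : ∀ A ∈ Icc a (a + t) ×ˢ Icc b (b + t), ∀ B ∈ Icc a (a + t) ×ˢ Icc b (b + t),
      ∃ fx fy : ℝ, 0 < fx ∧ 0 < fy ∧ g0 * fx < t * fy ∧ g0 * fy < ct * fx ∧
        f B - f A = fx * (B.1 - A.1) + fy * (B.2 - A.2))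
    (v : ℝ) (x₀ y₀ : ℝ) (hx₀ : x₀ ∈ Icc a (a + t)) (hy₀ : y₀ ∈ Icc b (b + t))
    (hv : f (x₀, y₀) = v) :
    ∃ i j : Fin n, ∃ P : ℝ × ℝ,
      P ∈ Icc (p i) (p i + ct) ×ˢ Icc (q j) (q j + ct) ∧ f P = v := by
  have hnn : n - 1 < n := by omega
  set i0 : Fin n := ⟨0, hn1⟩ with hi0
  set il : Fin n := ⟨n - 1, hnn⟩ with hil
  -- weak monotonicity
  have hpm' : ∀ i j : Fin n, (i : ℕ) ≤ (j : ℕ) → p i ≤ p j := by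
    intro i j h
    rcases eq_or_lt_of_le h with h' | h'
    · rw [Fin.ext h']
    · linarith [hpm i j h']
  have hqm' : ∀ i j : Fin n, (i : ℕ) ≤ (j : ℕ) → q i ≤ q j := by
    intro i j h
    rcases eq_or_lt_of_le h with h' | h'
    · rw [Fin.ext h']
    · linarith [hqm i j h']
  have hpa : ∀ i : Fin n, a ≤ p i ∧ p i + ct ≤ a + t := by
    intro i
    refine ⟨hp0 ▸ hpm' i0 i (Nat.zero_le _), ?_⟩
    have h1 : p i ≤ p il := hpm' i il (by simp only [hil]; omega)
    linarith
  have hqa : ∀ i : Fin n, b ≤ q i ∧ q i + ct ≤ b + t := by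
    intro i
    refine ⟨hq0 ▸ hqm' i0 i (Nat.zero_le _), ?_⟩
    have h1 : q i ≤ q il := hqm' i il (by simp only [hil]; omega)
    linarith
  have hmemK : ∀ (i j : Fin n) (s u : ℝ), 0 ≤ s → s ≤ ct → 0 ≤ u → u ≤ ct →
      (p i + s, q j + u) ∈ Icc a (a + t) ×ˢ Icc b (b + t) := by
    intro i j s u h0 h1 h2 h3
    obtain ⟨c1, c2⟩ := hpa i; obtain ⟨c3, c4⟩ := hqa j
    simp only [Set.mem_prod, Set.mem_Icc]
    refine ⟨⟨by linarith, by linarith⟩, by linarith, by linarith⟩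
  have hmem0 : ∀ i j : Fin n, (p i, q j) ∈ Icc a (a + t) ×ˢ Icc b (b + t) := by
    intro i j
    obtain ⟨c1, c2⟩ := hpa i; obtain ⟨c3, c4⟩ := hqa j
    simp only [Set.mem_prod, Set.mem_Icc]
    refine ⟨⟨by linarith, by linarith⟩, by linarith, by linarith⟩
  have hmem1 : ∀ i j : Fin n, (p i + ct, q j + ct) ∈ Icc a (a + t) ×ˢ Icc b (b + t) := by
    intro i j
    obtain ⟨c1, c2⟩ := hpa i; obtain ⟨c3, c4⟩ := hqa j
    simp only [Set.mem_prod, Set.mem_Icc]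
    refine ⟨⟨by linarith, by linarith⟩, by linarith, by linarith⟩
  -- monotonicity of f on the box
  have hmono : ∀ x1 y1 x2 y2 : ℝ, (x1, y1) ∈ Icc a (a + t) ×ˢ Icc b (b + t) →
      (x2, y2) ∈ Icc a (a + t) ×ˢ Icc b (b + t) → x1 ≤ x2 → y1 ≤ y2 →
      f (x1, y1) ≤ f (x2, y2) := by
    intro x1 y1 x2 y2 hA hB h1 h2
    obtain ⟨fx, fy, hfx, hfy, _, _, heq⟩ := hmvt (x1, y1) hA (x2, y2) hB
    dsimp only at heq
    nlinarith
  have hx₀y₀ : (x₀, y₀) ∈ Icc a (a + t) ×ˢ Icc b (b + t) := ⟨hx₀, hy₀⟩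
  by_contra hcon
  push_neg at hcon
  -- every cell is low or high
  have hLH : ∀ i j : Fin n, f (p i + ct, q j + ct) < v ∨ v < f (p i, q j) := by
    intro i j
    by_contra h
    push_neg at h
    obtain ⟨h1, h2⟩ := h
    have hc : ContinuousOn (fun s : ℝ => f (p i + s, q j + s)) (Icc 0 ct) := by
      apply hcont.comp
      · fun_prop
      · intro s hs
        exact hmemK i j s s hs.1 hs.2 hs.1 hs.2
    have hiv := intermediate_value_Icc hct.le hc
    have hvmem : v ∈ Icc (f (p i + 0, q j + 0)) (f (p i + ct, q j + ct)) := by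
      simp only [add_zero]
      exact ⟨h2, h1⟩
    obtain ⟨s, hs, hfs⟩ := hiv hvmem
    refine hcon i j (p i + s, q j + s) ?_ hfs
    simp only [Set.mem_prod, Set.mem_Icc]
    exact ⟨⟨by linarith [hs.1], by linarith [hs.2]⟩, by linarith [hs.1], by linarith [hs.2]⟩
  have hnotboth : ∀ i j : Fin n, f (p i + ct, q j + ct) < v → v < f (p i, q j) → False := by
    intro i j h1 h2
    have := hmono (p i) (q j) (p i + ct) (q j + ct) (hmem0 i j) (hmem1 i j)
      (by linarith) (by linarith)
    linarith
  have hLanti : ∀ i j i' j' : Fin n, (i' : ℕ) ≤ i → (j' : ℕ) ≤ j →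
      f (p i + ct, q j + ct) < v → f (p i' + ct, q j' + ct) < v := by
    intro i j i' j' h1 h2 hL
    have := hmono (p i' + ct) (q j' + ct) (p i + ct) (q j + ct) (hmem1 i' j') (hmem1 i j)
      (by linarith [hpm' i' i h1]) (by linarith [hqm' j' j h2])
    linarith
  -- j-transition contradiction
  have hjtrans : ∀ i j j' : Fin n, (j : ℕ) + 1 = (j' : ℕ) →
      f (p i + ct, q j + ct) < v → v < f (p i, q j') → False := by
    intro i j j' hjj hL hH
    obtain ⟨fx, fy, hfx, hfy, hb1, hb2, heq⟩ :=
      hmvt (p i + ct, q j + ct) (hmem1 i j) (p i, q j') (hmem0 i j')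
    dsimp only at heq
    have hgap : q j' - (q j + ct) ≤ g0 := hqg j j' hjj
    have hgap0 : 0 ≤ q j' - (q j + ct) := by linarith [hqm j j' (by omega)]
    have c1 : fy * (q j' - (q j + ct)) ≤ fy * g0 := mul_le_mul_of_nonneg_left hgap hfy.le
    nlinarith
  -- i-transition contradiction
  have hitrans : ∀ i i' : Fin n, (i : ℕ) + 1 = (i' : ℕ) →
      f (p i + ct, q il + ct) < v → v < f (p i', q i0) → False := by
    intro i i' hii hL hH
    obtain ⟨fx, fy, hfx, hfy, hb1, hb2, heq⟩ :=
      hmvt (p i + ct, q il + ct) (hmem1 i il) (p i', q i0) (hmem0 i' i0)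
    dsimp only at heq
    have hgap : p i' - (p i + ct) ≤ g0 := hpg i i' hii
    have hgap0 : 0 ≤ p i' - (p i + ct) := by linarith [hpm i i' (by omega)]
    have hq0l : q i0 - (q il + ct) = -t := by rw [hq0]; linarith
    have c1 : fx * (p i' - (p i + ct)) ≤ fx * g0 := mul_le_mul_of_nonneg_left hgap hfx.le
    nlinarith
  -- dichotomy for columns
  have hdich : ∀ i : Fin n, (∀ j, f (p i + ct, q j + ct) < v) ∨ (∀ j, v < f (p i, q j)) := by
    intro i
    by_contra h
    push_neg at h
    obtain ⟨⟨j₁, hj₁⟩, ⟨j₂, hj₂⟩⟩ := h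
    have hHj₁ : v < f (p i, q j₁) := (hLH i j₁).resolve_left (not_lt.mpr hj₁)
    have hLj₂ : f (p i + ct, q j₂ + ct) < v := (hLH i j₂).resolve_right (not_lt.mpr hj₂)
    have hlt : (j₂ : ℕ) < (j₁ : ℕ) := by
      by_contra hge
      push_neg at hge
      exact hnotboth i j₁ (hLanti i j₂ i j₁ le_rfl hge hLj₂) hHj₁
    obtain ⟨k, hk1, hk2, hk3, hk4⟩ := nat_transition
      (fun k => f (p i + ct, q ⟨min k (n - 1), by omega⟩ + ct) < v) j₂ j₁
      (by
        have e : (⟨min (j₂ : ℕ) (n - 1), by omega⟩ : Fin n) = j₂ := Fin.ext (min_eq_left (by omega))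
        simpa only [e] using hLj₂)
      (by
        have e : (⟨min (j₁ : ℕ) (n - 1), by omega⟩ : Fin n) = j₁ := Fin.ext (min_eq_left (by omega))
        simp only [e]
        intro hh
        exact hnotboth i j₁ hh hHj₁)
      hlt.le
    have hkn : k + 1 ≤ n - 1 := by omega
    have e1 : (⟨min k (n - 1), by omega⟩ : Fin n) = ⟨k, by omega⟩ := Fin.ext (min_eq_left (by omega))
    have e2 : (⟨min (k + 1) (n - 1), by omega⟩ : Fin n) = ⟨k + 1, by omega⟩ :=
      Fin.ext (min_eq_left (by omega))
    simp only [e1] at hk3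
    simp only [e2] at hk4
    have hH : v < f (p i, q ⟨k + 1, by omega⟩) :=
      (hLH i ⟨k + 1, by omega⟩).resolve_left hk4
    exact hjtrans i ⟨k, by omega⟩ ⟨k + 1, by omega⟩ rfl hk3 hH
  -- corner facts
  have hnotH00 : ¬ v < f (p i0, q i0) := by
    have := hmono (p i0) (q i0) x₀ y₀ (hmem0 i0 i0) hx₀y₀
      (by rw [hp0]; exact hx₀.1) (by rw [hq0]; exact hy₀.1)
    rw [hv] at this
    linarith
  have hnotLll : ¬ f (p il + ct, q il + ct) < v := by
    have := hmono x₀ y₀ (p il + ct) (q il + ct) hx₀y₀ (hmem1 il il)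
      (by rw [hpl]; exact hx₀.2) (by rw [hql]; exact hy₀.2)
    rw [hv] at this
    linarith
  have hallL0 : ∀ j, f (p i0 + ct, q j + ct) < v := by
    rcases hdich i0 with h | h
    · exact h
    · exact absurd (h i0) hnotH00
  have hnotallLl : ¬ ∀ j, f (p il + ct, q j + ct) < v := fun h => hnotLll (h il)
  obtain ⟨k, hk1, hk2, hk3, hk4⟩ := nat_transition
    (fun k => ∀ j, f (p ⟨min k (n - 1), by omega⟩ + ct, q j + ct) < v) 0 (n - 1)
    (by
      have e : (⟨min 0 (n - 1), by omega⟩ : Fin n) = i0 := Fin.ext (min_eq_left (by omega))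
      simpa only [e] using hallL0)
    (by
      have e : (⟨min (n - 1) (n - 1), by omega⟩ : Fin n) = il := Fin.ext (min_eq_left (by omega))
      simpa only [e] using hnotallLl)
    (Nat.zero_le _)
  have hkk : k + 1 < n := by omega
  have hkk0 : k < n := by omega
  have e1 : (⟨min k (n - 1), by omega⟩ : Fin n) = ⟨k, hkk0⟩ := Fin.ext (min_eq_left (by omega))
  have e2 : (⟨min (k + 1) (n - 1), by omega⟩ : Fin n) = ⟨k + 1, hkk⟩ :=
    Fin.ext (min_eq_left (by omega))
  simp only [e1] at hk3
  simp only [e2] at hk4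
  have hallH : ∀ j, v < f (p ⟨k + 1, hkk⟩, q j) := by
    rcases hdich ⟨k + 1, hkk⟩ with h | h
    · exact absurd h hk4
    · exact h
  exact hitrans ⟨k, hkk0⟩ ⟨k + 1, hkk⟩ rfl (hk3 il) (hallH i0)

/-- gap bound for sorted children -/
lemma sorted_gap (n : ℕ) (hn1 : 0 < n) (ct t aa : ℝ) (p : Fin n → ℝ)
    (hp0 : p ⟨0, hn1⟩ = aa) (hpl : p ⟨n - 1, by omega⟩ + ct = aa + t)
    (hpm : ∀ i j : Fin n, (i : ℕ) < (j : ℕ) → p i + ct ≤ p j) :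
    ∀ i j : Fin n, (i : ℕ) + 1 = (j : ℕ) → p j - (p i + ct) ≤ t - n * ct := by
  have key : ∀ d : ℕ, ∀ i j : Fin n, (i : ℕ) + d = (j : ℕ) → (d : ℝ) * ct ≤ p j - p i := by
    intro d
    induction d with
    | zero =>
      intro i j h
      have : i = j := Fin.ext (by omega)
      subst this
      simp
    | succ d ih =>
      intro i j h
      have hiN : (i : ℕ) + d < n := by omega
      have h1 := ih i ⟨(i : ℕ) + d, hiN⟩ rfl
      have h2 := hpm ⟨(i : ℕ) + d, hiN⟩ j (by simp; omega)
      push_cast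
      linarith
  intro i j hij
  have hjn : (j : ℕ) ≤ n - 1 := by omega
  have k1 := key (i : ℕ) ⟨0, hn1⟩ i (by simp)
  have k2 := key (n - 1 - (j : ℕ)) j ⟨n - 1, by omega⟩ (by simp; omega)
  rw [hp0] at k1
  have c1 : ((n - 1 - (j : ℕ) : ℕ) : ℝ) = (n : ℝ) - 1 - (j : ℕ) := by
    have : (j : ℕ) ≤ n - 1 := hjn
    push_cast [Nat.cast_sub (by omega : (j:ℕ) ≤ n - 1), Nat.cast_sub (by omega : 1 ≤ n)]
    ring
  rw [c1] at k2
  have c2 : ((i : ℕ) : ℝ) = (j : ℕ) - 1 := by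
    have : (i : ℕ) + 1 = (j : ℕ) := hij
    push_cast [← this]
    ring
  rw [c2] at k1
  linarith

/-- children of a basic interval: extraction and sorting -/
lemma moran_children {nseq : ℕ → ℕ} {cseq : ℕ → ℝ} (M : MoranStructure nseq cseq)
    (m : ℕ) (σ : MoranWord nseq m) (aa t : ℝ) (ht : 0 < t) (hc : 0 < cseq m)
    (hI : M.T m σ = Icc aa (aa + t)) (hn1 : 0 < nseq m) :
    ∃ p : Fin (nseq m) → ℝ,
      (∀ i : Fin (nseq m), Icc (p i) (p i + cseq m * t) ⊆ M.tilde m σ) ∧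
      p ⟨0, hn1⟩ = aa ∧ p ⟨nseq m - 1, by omega⟩ + cseq m * t = aa + t ∧
      (∀ i j : Fin (nseq m), (i : ℕ) < (j : ℕ) → p i + cseq m * t ≤ p j) := by
  have hnn : nseq m - 1 < nseq m := by omega
  set n := nseq m with hn
  set ct := cseq m * t with hctdef
  have hct : 0 < ct := mul_pos hc ht
  have hx : ∀ i : Fin n, ∃ xi : ℝ, M.T (m + 1) (Fin.snoc σ i) = Icc xi (xi + ct) := by
    intro i
    obtain ⟨u, w, huw, hT⟩ := M.isClosedInterval (m + 1) (Fin.snoc σ i)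
    have hd := M.ratio m σ i
    rw [hT, hI] at hd
    rw [Real.diam_Icc huw.le, Real.diam_Icc (by linarith : aa ≤ aa + t)] at hd
    have hw : w = u + ct := by
      have he : aa + t - aa = t := by ring
      rw [he] at hd
      linarith
    exact ⟨u, by rw [hT, hw]⟩
  choose x hxT using hx
  have hsep : ∀ i j : Fin n, i ≠ j → x i + ct ≤ x j ∨ x j + ct ≤ x i := by
    intro i j hij
    have hd := M.disjoint_interiors m σ i j hij
    rw [hxT i, hxT j, interior_Icc, interior_Icc] at hd
    by_contra h
    push_neg at h
    obtain ⟨h1, h2⟩ := h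
    have hlt : max (x i) (x j) < min (x i + ct) (x j + ct) := by
      rw [max_lt_iff, lt_min_iff, lt_min_iff]
      refine ⟨⟨by linarith, by linarith⟩, by linarith, by linarith⟩
    have m1 := le_max_left (x i) (x j)
    have m2 := le_max_right (x i) (x j)
    have m3 := min_le_left (x i + ct) (x j + ct)
    have m4 := min_le_right (x i + ct) (x j + ct)
    have hzi : (max (x i) (x j) + min (x i + ct) (x j + ct)) / 2
        ∈ Ioo (x i) (x i + ct) ∩ Ioo (x j) (x j + ct) := by
      refine ⟨⟨by linarith, by linarith⟩, by linarith, by linarith⟩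
    rw [hd] at hzi
    exact hzi
  have hin : ∀ i : Fin n, aa ≤ x i ∧ x i + ct ≤ aa + t := by
    intro i
    have h1 : M.T (m + 1) (Fin.snoc σ i) ⊆ Icc aa (aa + t) := hI ▸ M.child_subset m σ i
    rw [hxT i] at h1
    have h2 := h1 (left_mem_Icc.mpr (by linarith))
    have h3 := h1 (right_mem_Icc.mpr (by linarith))
    exact ⟨h2.1, h3.2⟩
  set π := Tuple.sort x with hπ
  set p := x ∘ π with hp
  have hmono : Monotone p := Tuple.monotone_sort x
  have hmono' : ∀ i j : Fin n, (i : ℕ) ≤ (j : ℕ) → p i ≤ p j := fun i j h =>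
    hmono (Fin.le_def.mpr h)
  have hpm : ∀ i j : Fin n, (i : ℕ) < (j : ℕ) → p i + ct ≤ p j := by
    intro i j hij
    have hle : p i ≤ p j := hmono' i j hij.le
    have hne : π i ≠ π j := by
      intro h
      have h2 : (i : ℕ) = (j : ℕ) := congrArg Fin.val (π.injective h)
      omega
    rcases hsep (π i) (π j) hne with h | h
    · exact h
    · exfalso
      have h3 : p j + ct ≤ p i := h
      linarith
  have hrange : ∀ i : Fin n, aa ≤ p i ∧ p i + ct ≤ aa + t := fun i => hin (π i)
  have hxp : ∀ k : Fin n, x k = p (π.symm k) := by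
    intro k
    simp only [hp, Function.comp_apply, Equiv.apply_symm_apply]
  have hsub2 : Icc aa (aa + t) ⊆ Icc (p ⟨0, hn1⟩) (p ⟨n - 1, hnn⟩ + ct) := by
    rw [← hI, ← M.hull m σ]
    apply convexHull_min ?_ (convex_Icc _ _)
    apply iUnion_subset
    intro k
    rw [hxT k]
    apply Icc_subset_Icc
    · rw [hxp k]
      exact hmono' _ _ (Nat.zero_le _)
    · rw [hxp k]
      have h4 := hmono' (π.symm k) ⟨n - 1, hnn⟩ (Nat.le_pred_of_lt (π.symm k).isLt)
      linarith
  have hmem_a := hsub2 (left_mem_Icc.mpr (by linarith))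
  have hmem_b := hsub2 (right_mem_Icc.mpr (by linarith))
  have hp0 : p ⟨0, hn1⟩ = aa := le_antisymm hmem_a.1 (hrange _).1
  have hpl : p ⟨n - 1, hnn⟩ + ct = aa + t := le_antisymm (hrange _).2 hmem_b.2
  refine ⟨p, ?_, hp0, hpl, hpm⟩
  intro i
  rw [show Icc (p i) (p i + ct) = M.T (m + 1) (Fin.snoc σ (π i)) from (hxT (π i)).symm]
  intro y hy
  exact Set.mem_iUnion.mpr ⟨π i, hy⟩

/-- orientation: reflect children data if needed -/
lemma orient_data (n : ℕ) (hn1 : 0 < n) (aa t ct g0 ε : ℝ) (hε : ε = 1 ∨ ε = -1)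
    (S : Set ℝ) (p : Fin n → ℝ)
    (hsub : ∀ i : Fin n, Icc (p i) (p i + ct) ⊆ S)
    (hp0 : p ⟨0, hn1⟩ = aa) (hpl : p ⟨n - 1, by omega⟩ + ct = aa + t)
    (hpm : ∀ i j : Fin n, (i : ℕ) < (j : ℕ) → p i + ct ≤ p j)
    (hpg : ∀ i j : Fin n, (i : ℕ) + 1 = (j : ℕ) → p j - (p i + ct) ≤ g0) :
    ∃ (mm : ℝ → ℝ) (P : Fin n → ℝ),
      Continuous mm ∧ (∀ x, mm (mm x) = x) ∧ (∀ u w : ℝ, mm u - mm w = ε * (u - w)) ∧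
      (∀ x ∈ Icc aa (aa + t), mm x ∈ Icc aa (aa + t)) ∧
      (∀ i : Fin n, ∀ x ∈ Icc (P i) (P i + ct), mm x ∈ S) ∧
      P ⟨0, hn1⟩ = aa ∧ P ⟨n - 1, by omega⟩ + ct = aa + t ∧
      (∀ i j : Fin n, (i : ℕ) < (j : ℕ) → P i + ct ≤ P j) ∧
      (∀ i j : Fin n, (i : ℕ) + 1 = (j : ℕ) → P j - (P i + ct) ≤ g0) := by
  have hnn : n - 1 < n := by omega
  have hpl' : p ⟨n - 1, hnn⟩ + ct = aa + t := hpl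
  rcases hε with rfl | rfl
  · exact ⟨id, p, continuous_id, fun x => rfl, fun u w => by simp, fun x hx => hx,
      fun i x hx => hsub i hx, hp0, hpl, hpm, hpg⟩
  · have hrev : ∀ i : Fin n, n - 1 - (i : ℕ) < n := by intro i; omega
    refine ⟨fun x => 2 * aa + t - x,
      fun i => 2 * aa + t - ct - p ⟨n - 1 - (i : ℕ), hrev i⟩,
      by continuity, fun x => by ring, fun u w => by ring, ?_, ?_, ?_, ?_, ?_, ?_⟩
    · intro x hx
      exact ⟨by dsimp only; linarith [hx.2], by dsimp only; linarith [hx.1]⟩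
    · intro i x hx
      apply hsub ⟨n - 1 - (i : ℕ), hrev i⟩
      obtain ⟨h1, h2⟩ := hx
      constructor
      · dsimp only at h1 h2 ⊢
        linarith
      · dsimp only at h1 h2 ⊢
        linarith
    · have e : (⟨n - 1 - ((⟨0, hn1⟩ : Fin n) : ℕ), hrev _⟩ : Fin n) = ⟨n - 1, hnn⟩ :=
        Fin.ext (by simp)
      dsimp only
      rw [e]
      linarith
    · have e : (⟨n - 1 - ((⟨n - 1, by omega⟩ : Fin n) : ℕ), hrev _⟩ : Fin n) = ⟨0, hn1⟩ :=
        Fin.ext (by simp)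
      dsimp only
      rw [e, hp0]
      ring
    · intro i j hij
      have hj := j.isLt
      have h1 := hpm ⟨n - 1 - (j : ℕ), hrev j⟩ ⟨n - 1 - (i : ℕ), hrev i⟩
        (by dsimp only; omega)
      dsimp only at h1 ⊢
      linarith
    · intro i j hij
      have hj := j.isLt
      have h1 := hpg ⟨n - 1 - (j : ℕ), hrev j⟩ ⟨n - 1 - (i : ℕ), hrev i⟩
        (by dsimp only; omega)
      dsimp only at h1 ⊢
      linarith

/-- **Lemma 2.2.**  Let `I = [a, a+t]` and `J = [b, b+t]` be rank-`m`
basic intervals of the Moran sets `E1` and `E2` (so `t = c_1 ⋯ c_m`; in the paper's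
indexing `m = k - 1` with `k ≥ 1`), with `I × J ⊆ U`, where `f` is continuously
differentiable on the open set `U`, the partial derivatives `∂ₓf, ∂_yf` are
nonvanishing with constant signs on `I × J`, and for every `(x, y) ∈ I × J`
`sup_j (1 - c_j n_j) < |∂_y f(x,y) / ∂_x f(x,y)| < inf_j (c_j / (1 - n_j c_j))`.
Then `f(I × J) = f(Ĩ × J̃)`. -/
theorem moran_image_eq_image_tilde
    (nseq : ℕ → ℕ) (cseq : ℕ → ℝ)
    (hn : ∀ k, 2 ≤ nseq k) (hc : ∀ k, 0 < cseq k)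
    (hcn : ∀ k, cseq k * (nseq k : ℝ) < 1)
    (M1 M2 : MoranStructure nseq cseq)
    (U : Set (ℝ × ℝ)) (hU : IsOpen U)
    (f : ℝ × ℝ → ℝ) (hf : ContDiffOn ℝ 1 f U)
    (m : ℕ) (σ : MoranWord nseq m) (τ : MoranWord nseq m)
    (a b t : ℝ) (ht : t = ∏ j ∈ Finset.range m, cseq j)
    (hI : M1.T m σ = Icc a (a + t)) (hJ : M2.T m τ = Icc b (b + t))
    (hIJU : Icc a (a + t) ×ˢ Icc b (b + t) ⊆ U)
    (hsignx : (∀ p ∈ Icc a (a + t) ×ˢ Icc b (b + t), 0 < fderiv ℝ f p (1, 0)) ∨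
      (∀ p ∈ Icc a (a + t) ×ˢ Icc b (b + t), fderiv ℝ f p (1, 0) < 0))
    (hsigny : (∀ p ∈ Icc a (a + t) ×ˢ Icc b (b + t), 0 < fderiv ℝ f p (0, 1)) ∨
      (∀ p ∈ Icc a (a + t) ×ˢ Icc b (b + t), fderiv ℝ f p (0, 1) < 0))
    (hbound : ∀ p ∈ Icc a (a + t) ×ˢ Icc b (b + t),
      (⨆ j, (1 - cseq j * (nseq j : ℝ))) <
          |fderiv ℝ f p (0, 1) / fderiv ℝ f p (1, 0)| ∧
        |fderiv ℝ f p (0, 1) / fderiv ℝ f p (1, 0)| <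
          ⨅ j, cseq j / (1 - (nseq j : ℝ) * cseq j)) :
    f '' (M1.T m σ ×ˢ M2.T m τ) = f '' (M1.tilde m σ ×ˢ M2.tilde m τ) := by
  have ht0 : 0 < t := by rw [ht]; exact Finset.prod_pos (fun j _ => hc j)
  have hn1 : 0 < nseq m := by have := hn m; omega
  have hct : 0 < cseq m * t := mul_pos (hc m) ht0
  have hcn1 : cseq m * (nseq m : ℝ) < 1 := hcn m
  have hg0 : 0 ≤ t - (nseq m : ℝ) * (cseq m * t) := by nlinarith
  have htsub1 : M1.tilde m σ ⊆ M1.T m σ := iUnion_subset (fun i => M1.child_subset m σ i)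
  have htsub2 : M2.tilde m τ ⊆ M2.T m τ := iUnion_subset (fun i => M2.child_subset m τ i)
  apply Subset.antisymm ?_ (image_mono (f := f) (prod_mono htsub1 htsub2))
  rintro z ⟨⟨x₀, y₀⟩, hmem, rfl⟩
  have hx₀ : x₀ ∈ Icc a (a + t) := by rw [← hI]; exact hmem.1
  have hy₀ : y₀ ∈ Icc b (b + t) := by rw [← hJ]; exact hmem.2
  have hKU : Icc a (a + t) ×ˢ Icc b (b + t) ⊆ U := hIJU
  have hconv : Convex ℝ (Icc a (a + t) ×ˢ Icc b (b + t)) :=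
    (convex_Icc a (a + t)).prod (convex_Icc b (b + t))
  have hdiff : ∀ P ∈ Icc a (a + t) ×ˢ Icc b (b + t),
      HasFDerivWithinAt f (fderiv ℝ f P) (Icc a (a + t) ×ˢ Icc b (b + t)) P := by
    intro P hP
    have h1 : DifferentiableAt ℝ f P :=
      (hf.differentiableOn one_ne_zero).differentiableAt (hU.mem_nhds (hKU hP))
    exact h1.hasFDerivAt.hasFDerivWithinAt
  have hcont : ContinuousOn f (Icc a (a + t) ×ˢ Icc b (b + t)) := hf.continuousOn.mono hKU
  -- sign normalization
  obtain ⟨ε₁, hε₁u, hε₁⟩ : ∃ e : ℝ, (e = 1 ∨ e = -1) ∧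
      ∀ P ∈ Icc a (a + t) ×ˢ Icc b (b + t), 0 < e * fderiv ℝ f P (1, 0) := by
    rcases hsignx with h | h
    · exact ⟨1, Or.inl rfl, fun P hP => by simpa using h P hP⟩
    · exact ⟨-1, Or.inr rfl, fun P hP => by simpa using h P hP⟩
  obtain ⟨ε₂, hε₂u, hε₂⟩ : ∃ e : ℝ, (e = 1 ∨ e = -1) ∧
      ∀ P ∈ Icc a (a + t) ×ˢ Icc b (b + t), 0 < e * fderiv ℝ f P (0, 1) := by
    rcases hsigny with h | h
    · exact ⟨1, Or.inl rfl, fun P hP => by simpa using h P hP⟩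
    · exact ⟨-1, Or.inr rfl, fun P hP => by simpa using h P hP⟩
  have hsq1 : ε₁ * ε₁ = 1 := by rcases hε₁u with rfl | rfl <;> norm_num
  have hsq2 : ε₂ * ε₂ = 1 := by rcases hε₂u with rfl | rfl <;> norm_num
  have habs1 : ∀ P ∈ Icc a (a + t) ×ˢ Icc b (b + t),
      ε₁ * fderiv ℝ f P (1, 0) = |fderiv ℝ f P (1, 0)| := by
    intro P hP
    have h1 := hε₁ P hP
    rcases hε₁u with rfl | rfl
    · rw [one_mul] at h1 ⊢; exact (abs_of_pos h1).symm
    · rw [neg_one_mul] at h1 ⊢; rw [abs_of_neg (by linarith)]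
  have habs2 : ∀ P ∈ Icc a (a + t) ×ˢ Icc b (b + t),
      ε₂ * fderiv ℝ f P (0, 1) = |fderiv ℝ f P (0, 1)| := by
    intro P hP
    have h1 := hε₂ P hP
    rcases hε₂u with rfl | rfl
    · rw [one_mul] at h1 ⊢; exact (abs_of_pos h1).symm
    · rw [neg_one_mul] at h1 ⊢; rw [abs_of_neg (by linarith)]
  -- ratio bounds
  have hbnd : ∀ P ∈ Icc a (a + t) ×ˢ Icc b (b + t),
      (t - (nseq m : ℝ) * (cseq m * t)) * (ε₁ * fderiv ℝ f P (1, 0)) <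
          t * (ε₂ * fderiv ℝ f P (0, 1)) ∧
        (t - (nseq m : ℝ) * (cseq m * t)) * (ε₂ * fderiv ℝ f P (0, 1)) <
          (cseq m * t) * (ε₁ * fderiv ℝ f P (1, 0)) := by
    intro P hP
    obtain ⟨hs, hi⟩ := hbound P hP
    rw [abs_div] at hs hi
    have hFxpos : 0 < |fderiv ℝ f P (1, 0)| := habs1 P hP ▸ hε₁ P hP
    have hFypos : 0 < |fderiv ℝ f P (0, 1)| := habs2 P hP ▸ hε₂ P hP
    have h1nc : 0 < 1 - (nseq m : ℝ) * cseq m := by nlinarith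
    have hsup : 1 - cseq m * (nseq m : ℝ) ≤ ⨆ j, (1 - cseq j * (nseq j : ℝ)) := by
      apply le_ciSup (f := fun j => 1 - cseq j * (nseq j : ℝ)) ?_ m
      refine ⟨1, ?_⟩
      rintro z ⟨j, rfl⟩
      have h2 : (0 : ℝ) ≤ cseq j * (nseq j : ℝ) := mul_nonneg (hc j).le (Nat.cast_nonneg _)
      simp only
      linarith
    have hinf : (⨅ j, cseq j / (1 - (nseq j : ℝ) * cseq j)) ≤
        cseq m / (1 - (nseq m : ℝ) * cseq m) := by
      apply ciInf_le (f := fun j => cseq j / (1 - (nseq j : ℝ) * cseq j)) ?_ m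
      refine ⟨0, ?_⟩
      rintro z ⟨j, rfl⟩
      have h3 : (0 : ℝ) < 1 - (nseq j : ℝ) * cseq j := by nlinarith [hcn j, hc j]
      simp only
      exact div_nonneg (hc j).le h3.le
    have hr1 : 1 - cseq m * (nseq m : ℝ) < |fderiv ℝ f P (0, 1)| / |fderiv ℝ f P (1, 0)| :=
      lt_of_le_of_lt hsup hs
    have hr2 : |fderiv ℝ f P (0, 1)| / |fderiv ℝ f P (1, 0)| <
        cseq m / (1 - (nseq m : ℝ) * cseq m) := lt_of_lt_of_le hi hinf
    have hr1' : (1 - cseq m * (nseq m : ℝ)) * |fderiv ℝ f P (1, 0)| < |fderiv ℝ f P (0, 1)| :=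
      (lt_div_iff₀ hFxpos).mp hr1
    have hr2' : |fderiv ℝ f P (0, 1)| * (1 - (nseq m : ℝ) * cseq m) <
        cseq m * |fderiv ℝ f P (1, 0)| := (div_lt_div_iff₀ hFxpos h1nc).mp hr2
    rw [habs1 P hP, habs2 P hP]
    constructor
    · nlinarith [mul_lt_mul_of_pos_left hr1' ht0]
    · nlinarith [mul_lt_mul_of_pos_left hr2' ht0]
  -- normalized MVT statement
  have hmvtK : ∀ A ∈ Icc a (a + t) ×ˢ Icc b (b + t), ∀ B ∈ Icc a (a + t) ×ˢ Icc b (b + t),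
      ∃ fx fy : ℝ, 0 < fx ∧ 0 < fy ∧
        (t - (nseq m : ℝ) * (cseq m * t)) * fx < t * fy ∧
        (t - (nseq m : ℝ) * (cseq m * t)) * fy < (cseq m * t) * fx ∧
        f B - f A = ε₁ * (fx * (B.1 - A.1)) + ε₂ * (fy * (B.2 - A.2)) := by
    intro A hA B hB
    obtain ⟨ξ, hξseg, hξeq⟩ := domain_mvt hdiff hconv hA hB
    have hξK : ξ ∈ Icc a (a + t) ×ˢ Icc b (b + t) := hconv.segment_subset hA hB hξseg
    refine ⟨ε₁ * fderiv ℝ f ξ (1, 0), ε₂ * fderiv ℝ f ξ (0, 1), hε₁ ξ hξK, hε₂ ξ hξK,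
      (hbnd ξ hξK).1, (hbnd ξ hξK).2, ?_⟩
    have hdecomp : B - A = (B.1 - A.1) • ((1 : ℝ), (0 : ℝ)) + (B.2 - A.2) • ((0 : ℝ), (1 : ℝ)) := by
      simp [Prod.ext_iff]
    rw [hξeq, hdecomp, map_add, (fderiv ℝ f ξ).map_smul, (fderiv ℝ f ξ).map_smul]
    simp only [smul_eq_mul]
    linear_combination (-(B.1 - A.1) * fderiv ℝ f ξ (1, 0)) * hsq1 +
      (-(B.2 - A.2) * fderiv ℝ f ξ (0, 1)) * hsq2
  -- children data
  obtain ⟨p, hpsub, hp0, hpl, hpm⟩ := moran_children M1 m σ a t ht0 (hc m) hI hn1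
  obtain ⟨q, hqsub, hq0, hql, hqm⟩ := moran_children M2 m τ b t ht0 (hc m) hJ hn1
  have hpg := sorted_gap (nseq m) hn1 (cseq m * t) t a p hp0 hpl hpm
  have hqg := sorted_gap (nseq m) hn1 (cseq m * t) t b q hq0 hql hqm
  -- orient
  obtain ⟨m₁, P, hm₁c, hm₁inv, hm₁diff, hm₁map, hPsub, hP0, hPl, hPm, hPg⟩ :=
    orient_data (nseq m) hn1 a t (cseq m * t) (t - (nseq m : ℝ) * (cseq m * t)) ε₁ hε₁u
      (M1.tilde m σ) p hpsub hp0 hpl hpm hpg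
  obtain ⟨m₂, Q, hm₂c, hm₂inv, hm₂diff, hm₂map, hQsub, hQ0, hQl, hQm, hQg⟩ :=
    orient_data (nseq m) hn1 b t (cseq m * t) (t - (nseq m : ℝ) * (cseq m * t)) ε₂ hε₂u
      (M2.tilde m τ) q hqsub hq0 hql hqm hqg
  -- transformed function
  set F : ℝ × ℝ → ℝ := fun A => f (m₁ A.1, m₂ A.2) with hF
  have hmapsF : MapsTo (fun A : ℝ × ℝ => (m₁ A.1, m₂ A.2))
      (Icc a (a + t) ×ˢ Icc b (b + t)) (Icc a (a + t) ×ˢ Icc b (b + t)) := by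
    intro A hA
    exact ⟨hm₁map A.1 hA.1, hm₂map A.2 hA.2⟩
  have hcontF : ContinuousOn F (Icc a (a + t) ×ˢ Icc b (b + t)) := by
    apply hcont.comp ?_ hmapsF
    exact ((hm₁c.comp continuous_fst).prodMk (hm₂c.comp continuous_snd)).continuousOn
  have hmvtF : ∀ A ∈ Icc a (a + t) ×ˢ Icc b (b + t), ∀ B ∈ Icc a (a + t) ×ˢ Icc b (b + t),
      ∃ fx fy : ℝ, 0 < fx ∧ 0 < fy ∧
        (t - (nseq m : ℝ) * (cseq m * t)) * fx < t * fy ∧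
        (t - (nseq m : ℝ) * (cseq m * t)) * fy < (cseq m * t) * fx ∧
        F B - F A = fx * (B.1 - A.1) + fy * (B.2 - A.2) := by
    intro A hA B hB
    obtain ⟨fx, fy, h1, h2, h3, h4, heq⟩ := hmvtK _ (hmapsF hA) _ (hmapsF hB)
    refine ⟨fx, fy, h1, h2, h3, h4, ?_⟩
    dsimp only at heq
    rw [hm₁diff B.1 A.1, hm₂diff B.2 A.2] at heq
    have hFB : F B = f (m₁ B.1, m₂ B.2) := rfl
    have hFA : F A = f (m₁ A.1, m₂ A.2) := rfl
    rw [hFB, hFA] at *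
    linear_combination heq + (fx * (B.1 - A.1)) * hsq1 + (fy * (B.2 - A.2)) * hsq2
  -- apply grid lemma
  obtain ⟨i, j, R, hR, hfR⟩ := grid_helper F a b t (cseq m * t)
    (t - (nseq m : ℝ) * (cseq m * t)) (nseq m) hn1 hct hg0 P Q hP0 hPl hQ0 hQl hPm hQm hPg hQg
    hcontF hmvtF (f (x₀, y₀)) (m₁ x₀) (m₂ y₀) (hm₁map x₀ hx₀) (hm₂map y₀ hy₀)
    (by show f (m₁ (m₁ x₀), m₂ (m₂ y₀)) = f (x₀, y₀); rw [hm₁inv x₀, hm₂inv y₀])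
  exact ⟨(m₁ R.1, m₂ R.2), ⟨hPsub i R.1 hR.1, hQsub j R.2 hR.2⟩, hfR⟩
end

section
/- Let U ⊆ ℝ² be open and let f : U → ℝ be continuously differentiable with ∂_x f > 0 and ∂_y f > 0 on a closed square I × J ⊆ U, where I = [a, a+t] and J = [b, b+t] with t > 0. Fix an integer n ≥ 2 and a real c with 0 < cn < 1, and suppose that for every (x, y) ∈ I × J one has ∂_y f(x, y) / ∂_x f(x, y) < c / (1 − n c). Let J_1, …, J_n be closed subintervals of J, each of length c·t, with pairwise disjoint interiors, whose union J̃ has convex hull equal to J, and let I' ⊆ I be a closed subinterval of length c·t. Then ⋃_{j=1}^{n} f(I' × J_j) is a (connected) interval, equal to f(I' × J̃) and to the interval [ f(min I', b), f(max I', b+t) ]. -/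
open Set
open scoped ENNReal

private lemma mvt_rect {U : Set (ℝ × ℝ)} (hU : IsOpen U) {f : ℝ × ℝ → ℝ}
    (hf : ContDiffOn ℝ 1 f U) {R : Set (ℝ × ℝ)} (hRU : R ⊆ U) (hR : Convex ℝ R)
    {p q : ℝ × ℝ} (hp : p ∈ R) (hq : q ∈ R) :
    ∃ z ∈ R, f q - f p =
      (q.1 - p.1) * fderiv ℝ f z (1, 0) + (q.2 - p.2) * fderiv ℝ f z (0, 1) := by
  have hdiff : ∀ x ∈ R, HasFDerivWithinAt f (fderiv ℝ f x) R x := by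
    intro x hx
    have h1 : DifferentiableAt ℝ f x :=
      (hf.differentiableOn one_ne_zero).differentiableAt (hU.mem_nhds (hRU hx))
    exact h1.hasFDerivAt.hasFDerivWithinAt
  obtain ⟨z, hz, hz2⟩ := domain_mvt hdiff hR hp hq
  refine ⟨z, hR.segment_subset hp hq hz, ?_⟩
  rw [hz2]
  have hqp : q - p = (q.1 - p.1) • ((1:ℝ), (0:ℝ)) + (q.2 - p.2) • ((0:ℝ), (1:ℝ)) := by
    ext <;> simp
  rw [hqp, map_add, map_smul, map_smul, smul_eq_mul, smul_eq_mul]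

/-- first intermediate claim in the proof of Lemma 2.2.
Let `f` be continuously differentiable on the open set `U ⊆ ℝ²` with `∂ₓ f > 0` and
`∂_y f > 0` on a closed square `I × J ⊆ U`, `I = [a, a+t]`, `J = [b, b+t]`, `t > 0`.
Fix `n ≥ 2` and `0 < cn < 1`, and suppose `∂_y f / ∂ₓ f < c / (1 - nc)` on `I × J`.
If `J_1, …, J_n ⊆ J` are closed intervals of length `c·t` with pairwise disjoint
interiors whose union `J̃` has convex hull `J`, and `I' = [a', a' + c·t] ⊆ I`, then
`⋃_j f(I' × J_j)` is the interval `f(I' × J̃) = [f(min I', b), f(max I', b+t)]`. -/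
theorem union_image_subrectangles_eq_interval
    (U : Set (ℝ × ℝ)) (hU : IsOpen U)
    (f : ℝ × ℝ → ℝ) (hf : ContDiffOn ℝ 1 f U)
    (a b t : ℝ) (ht : 0 < t)
    (hIJU : Icc a (a + t) ×ˢ Icc b (b + t) ⊆ U)
    (hdx : ∀ p ∈ Icc a (a + t) ×ˢ Icc b (b + t), 0 < fderiv ℝ f p (1, 0))
    (hdy : ∀ p ∈ Icc a (a + t) ×ˢ Icc b (b + t), 0 < fderiv ℝ f p (0, 1))
    (n : ℕ) (hn : 2 ≤ n) (c : ℝ) (hc : 0 < c) (hcn : c * (n : ℝ) < 1)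
    (hratio : ∀ p ∈ Icc a (a + t) ×ˢ Icc b (b + t),
      fderiv ℝ f p (0, 1) / fderiv ℝ f p (1, 0) < c / (1 - (n : ℝ) * c))
    (l : Fin n → ℝ)
    (hJsub : ∀ j, Icc (l j) (l j + c * t) ⊆ Icc b (b + t))
    (hJdisj : ∀ j j', j ≠ j' →
      interior (Icc (l j) (l j + c * t)) ∩ interior (Icc (l j') (l j' + c * t)) = ∅)
    (hJhull : convexHull ℝ (⋃ j, Icc (l j) (l j + c * t)) = Icc b (b + t))
    (a' : ℝ) (hI' : Icc a' (a' + c * t) ⊆ Icc a (a + t)) :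
    (⋃ j, f '' (Icc a' (a' + c * t) ×ˢ Icc (l j) (l j + c * t))) =
        f '' (Icc a' (a' + c * t) ×ˢ ⋃ j, Icc (l j) (l j + c * t)) ∧
      (⋃ j, f '' (Icc a' (a' + c * t) ×ˢ Icc (l j) (l j + c * t))) =
        Icc (f (a', b)) (f (a' + c * t, b + t)) := by
  have hct : 0 < c * t := mul_pos hc ht
  have hnc : (n : ℝ) * c < 1 := by rw [mul_comm]; exact hcn
  have h1nc : 0 < 1 - (n : ℝ) * c := by linarith
  have hRconv : Convex ℝ (Icc a (a + t) ×ˢ Icc b (b + t)) :=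
    (convex_Icc _ _).prod (convex_Icc _ _)
  have ha'1 : a ≤ a' := (hI' (left_mem_Icc.2 (by linarith))).1
  have ha'2 : a' + c * t ≤ a + t := (hI' (right_mem_Icc.2 (by linarith))).2
  have hlj1 : ∀ j, b ≤ l j := fun j => (hJsub j (left_mem_Icc.2 (by linarith))).1
  have hlj2 : ∀ j, l j + c * t ≤ b + t := fun j => (hJsub j (right_mem_Icc.2 (by linarith))).2
  have hmemR : ∀ x y : ℝ, a ≤ x → x ≤ a + t → b ≤ y → y ≤ b + t →
      ((x, y) : ℝ × ℝ) ∈ Icc a (a + t) ×ˢ Icc b (b + t) :=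
    fun x y h1 h2 h3 h4 => ⟨⟨h1, h2⟩, ⟨h3, h4⟩⟩
  have hkey : ∀ z ∈ Icc a (a + t) ×ˢ Icc b (b + t),
      fderiv ℝ f z (0, 1) * (1 - (n : ℝ) * c) < c * fderiv ℝ f z (1, 0) := by
    intro z hz
    have h1 := hratio z hz
    have h2 := hdx z hz
    rw [div_lt_div_iff₀ h2 h1nc] at h1
    linarith
  -- monotonicity in each coordinate
  have hmono : ∀ p q : ℝ × ℝ, p ∈ Icc a (a + t) ×ˢ Icc b (b + t) →
      q ∈ Icc a (a + t) ×ˢ Icc b (b + t) → p.1 ≤ q.1 → p.2 ≤ q.2 → f p ≤ f q := by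
    intro p q hp hq h1 h2
    obtain ⟨z, hz, he⟩ := mvt_rect hU hf hIJU hRconv hp hq
    nlinarith [hdx z hz, hdy z hz, mul_nonneg (sub_nonneg.2 h1) (hdx z hz).le,
      mul_nonneg (sub_nonneg.2 h2) (hdy z hz).le]
  -- overlap lemma
  have hover : ∀ y1 y2 : ℝ, b ≤ y1 → y1 ≤ b + t → b ≤ y2 → y2 ≤ b + t →
      y2 - y1 ≤ (1 - (n : ℝ) * c) * t → f (a', y2) ≤ f (a' + c * t, y1) := by
    intro y1 y2 hy11 hy12 hy21 hy22 hgap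
    have hp : ((a' : ℝ), y2) ∈ Icc a (a + t) ×ˢ Icc b (b + t) :=
      hmemR _ _ ha'1 (by linarith) hy21 hy22
    have hq : ((a' + c * t : ℝ), y1) ∈ Icc a (a + t) ×ˢ Icc b (b + t) :=
      hmemR _ _ (by linarith) ha'2 hy11 hy12
    obtain ⟨z, hz, he⟩ := mvt_rect hU hf hIJU hRconv hp hq
    simp only at he
    have h3 := hkey z hz
    have h4 := hdy z hz
    have h5 := hdx z hz
    nlinarith [mul_le_mul_of_nonneg_right hgap h4.le, mul_lt_mul_of_pos_left h3 ht]
  -- separation of intervals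
  have hsep : ∀ j j', j ≠ j' → l j + c * t ≤ l j' ∨ l j' + c * t ≤ l j := by
    intro j j' hne
    by_contra h
    push_neg at h
    obtain ⟨h1, h2⟩ := h
    have hd := hJdisj j j' hne
    rw [interior_Icc, interior_Icc] at hd
    rcases le_total (l j) (l j') with hle | hle
    · have hw : (l j' + (l j + c * t)) / 2 ∈
          Ioo (l j) (l j + c * t) ∩ Ioo (l j') (l j' + c * t) :=
        ⟨⟨by linarith, by linarith⟩, ⟨by linarith, by linarith⟩⟩
      rw [hd] at hw; exact hw
    · have hw : (l j + (l j' + c * t)) / 2 ∈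
          Ioo (l j) (l j + c * t) ∩ Ioo (l j') (l j' + c * t) :=
        ⟨⟨by linarith, by linarith⟩, ⟨by linarith, by linarith⟩⟩
      rw [hd] at hw; exact hw
  have hne0 : (Finset.univ : Finset (Fin n)).Nonempty := ⟨⟨0, by omega⟩, Finset.mem_univ _⟩
  obtain ⟨jmin, -, hjmin⟩ := Finset.exists_min_image Finset.univ l hne0
  obtain ⟨jmax, -, hjmax⟩ := Finset.exists_max_image Finset.univ l hne0
  have hbmin : l jmin = b := by
    refine le_antisymm ?_ (hlj1 _)
    by_contra h
    push_neg at h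
    have hsub2 : (⋃ j, Icc (l j) (l j + c * t)) ⊆ Icc (l jmin) (b + t) := by
      intro y hy
      simp only [mem_iUnion] at hy
      obtain ⟨j, hj⟩ := hy
      exact ⟨le_trans (hjmin j (Finset.mem_univ _)) hj.1, le_trans hj.2 (hlj2 j)⟩
    have h2 : convexHull ℝ (⋃ j, Icc (l j) (l j + c * t)) ⊆ Icc (l jmin) (b + t) :=
      convexHull_min hsub2 (convex_Icc _ _)
    rw [hJhull] at h2
    have h3 := (h2 (left_mem_Icc.2 (by linarith))).1
    linarith
  have hbmax : l jmax + c * t = b + t := by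
    refine le_antisymm (hlj2 _) ?_
    by_contra h
    push_neg at h
    have hsub2 : (⋃ j, Icc (l j) (l j + c * t)) ⊆ Icc b (l jmax + c * t) := by
      intro y hy
      simp only [mem_iUnion] at hy
      obtain ⟨j, hj⟩ := hy
      exact ⟨le_trans (hlj1 j) hj.1, le_trans hj.2 (by linarith [hjmax j (Finset.mem_univ _)])⟩
    have h2 : convexHull ℝ (⋃ j, Icc (l j) (l j + c * t)) ⊆ Icc b (l jmax + c * t) :=
      convexHull_min hsub2 (convex_Icc _ _)
    rw [hJhull] at h2
    have h3 := (h2 (right_mem_Icc.2 (by linarith))).2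
    linarith
  constructor
  · rw [prod_iUnion, image_iUnion]
  · refine subset_antisymm (iUnion_subset fun j => ?_) ?_
    · rintro z ⟨⟨x, y⟩, ⟨hx, hy⟩, rfl⟩
      have hxy : ((x : ℝ), y) ∈ Icc a (a + t) ×ˢ Icc b (b + t) := ⟨hI' hx, hJsub j hy⟩
      constructor
      · exact hmono (a', b) (x, y) (hmemR _ _ ha'1 (by linarith) le_rfl (by linarith)) hxy
          hx.1 (le_trans (hlj1 j) hy.1)
      · exact hmono (x, y) (a' + c * t, b + t) hxy
          (hmemR _ _ (by linarith) ha'2 (by linarith) le_rfl) hx.2 (le_trans hy.2 (hlj2 j))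
    · intro z hz
      -- choose j0 with f (a', l j0) ≤ z and l j0 maximal among such
      obtain ⟨j0, hj0T, hj0max⟩ := Finset.exists_max_image
        (Finset.univ.filter (fun j => f (a', l j) ≤ z)) l
        ⟨jmin, by simp only [Finset.mem_filter, Finset.mem_univ, true_and, hbmin]; exact hz.1⟩
      have hj0 : f (a', l j0) ≤ z := (Finset.mem_filter.1 hj0T).2
      have hclaim : z ≤ f (a' + c * t, l j0 + c * t) := by
        by_contra hcon
        push_neg at hcon
        have hlt : l j0 + c * t < b + t := by
          rcases lt_or_ge (l j0 + c * t) (b + t) with h | h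
          · exact h
          · exfalso
            have he : l j0 + c * t = b + t := le_antisymm (hlj2 _) h
            rw [he] at hcon
            exact absurd hz.2 (not_le.2 hcon)
        have hmaxgt : l j0 < l jmax := by linarith
        obtain ⟨j1, hj1T, hj1min⟩ := Finset.exists_min_image
          (Finset.univ.filter (fun j => l j0 < l j)) l
          ⟨jmax, by simp only [Finset.mem_filter, Finset.mem_univ, true_and]; exact hmaxgt⟩
        have hj1gt : l j0 < l j1 := (Finset.mem_filter.1 hj1T).2
        have hj1sep : l j0 + c * t ≤ l j1 := by
          rcases hsep j0 j1 (fun hh => by rw [hh] at hj1gt; exact lt_irrefl _ hj1gt) with h | h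
          · exact h
          · linarith
        -- measure argument: gap at most (1 - nc) t
        have hgap : l j1 - (l j0 + c * t) ≤ (1 - (n : ℝ) * c) * t := by
          have hdisj2 : Pairwise (Function.onFun Disjoint
              (fun j => Ioo (l j) (l j + c * t))) := by
            intro j j' hne
            have hd := hJdisj j j' hne
            rw [interior_Icc, interior_Icc] at hd
            exact Set.disjoint_iff_inter_eq_empty.2 hd
          have hμ : MeasureTheory.volume (⋃ j, Ioo (l j) (l j + c * t)) =
              (n : ℝ≥0∞) * ENNReal.ofReal (c * t) := by
            rw [MeasureTheory.measure_iUnion hdisj2 (fun j => measurableSet_Ioo)]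
            simp [Real.volume_Ioo, tsum_fintype, Finset.sum_const, Finset.card_univ,
              nsmul_eq_mul]
          have hsub3 : (⋃ j, Ioo (l j) (l j + c * t)) ⊆
              Icc b (l j0 + c * t) ∪ Icc (l j1) (b + t) := by
            intro y hy
            simp only [mem_iUnion] at hy
            obtain ⟨j, hj⟩ := hy
            rcases le_or_gt (l j) (l j0) with h | h
            · exact Or.inl ⟨le_trans (hlj1 j) hj.1.le, hj.2.le.trans (by linarith)⟩
            · exact Or.inr ⟨le_trans (hj1min j (Finset.mem_filter.2
                ⟨Finset.mem_univ _, h⟩)) hj.1.le, le_trans hj.2.le (hlj2 j)⟩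
          have hle : MeasureTheory.volume (⋃ j, Ioo (l j) (l j + c * t)) ≤
              MeasureTheory.volume (Icc b (l j0 + c * t)) +
                MeasureTheory.volume (Icc (l j1) (b + t)) :=
            (MeasureTheory.measure_mono hsub3).trans
              (MeasureTheory.measure_union_le _ _)
          rw [hμ, Real.volume_Icc, Real.volume_Icc] at hle
          have hcast : (n : ℝ≥0∞) * ENNReal.ofReal (c * t) =
              ENNReal.ofReal ((n : ℝ) * (c * t)) := by
            rw [← ENNReal.ofReal_natCast n, ← ENNReal.ofReal_mul (by positivity)]
          rw [hcast, ← ENNReal.ofReal_add (by linarith [hlj1 j0]) (by linarith [hlj2 j1])]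
            at hle
          have hfin := (ENNReal.ofReal_le_ofReal_iff
            (by linarith [hlj1 j0, hlj2 j1])).1 hle
          nlinarith [hfin]
        have hov := hover (l j0 + c * t) (l j1) (by linarith [hlj1 j0]) (hlj2 j0)
          (hlj1 j1) (by linarith [hlj2 j1]) (by linarith)
        have hj1T : f (a', l j1) ≤ z := le_trans hov hcon.le
        have := hj0max j1 (Finset.mem_filter.2 ⟨Finset.mem_univ _, hj1T⟩)
        linarith
      -- conclude via connectedness of the image of the j0 rectangle
      have hrsub : Icc a' (a' + c * t) ×ˢ Icc (l j0) (l j0 + c * t) ⊆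
          Icc a (a + t) ×ˢ Icc b (b + t) := prod_mono hI' (hJsub j0)
      have hpre : IsPreconnected
          (f '' (Icc a' (a' + c * t) ×ˢ Icc (l j0) (l j0 + c * t))) :=
        (((convex_Icc _ _).prod (convex_Icc _ _)).isPreconnected).image f
          (hf.continuousOn.mono (hrsub.trans hIJU))
      have hc1 : f (a', l j0) ∈ f '' (Icc a' (a' + c * t) ×ˢ Icc (l j0) (l j0 + c * t)) :=
        ⟨(a', l j0), ⟨left_mem_Icc.2 (by linarith), left_mem_Icc.2 (by linarith)⟩, rfl⟩
      have hc2 : f (a' + c * t, l j0 + c * t) ∈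
          f '' (Icc a' (a' + c * t) ×ˢ Icc (l j0) (l j0 + c * t)) :=
        ⟨(a' + c * t, l j0 + c * t),
          ⟨right_mem_Icc.2 (by linarith), right_mem_Icc.2 (by linarith)⟩, rfl⟩
      exact mem_iUnion.2 ⟨j0, hpre.Icc_subset hc1 hc2 ⟨hj0, hclaim⟩⟩
end

section
/- Let U ⊆ ℝ² be open and let f : U → ℝ be continuously differentiable with ∂_x f > 0 and ∂_y f > 0 on a closed square I × J ⊆ U, where I = [a, a+t] and J = [b, b+t] with t > 0. Fix an integer n ≥ 2 and a real c with 0 < cn < 1, and suppose that for every (x, y) ∈ I × J one has 1 − cn < ∂_y f(x, y) / ∂_x f(x, y) < c / (1 − n c). Let I_1, …, I_n (resp. J_1, …, J_n) be closed subintervals of I (resp. J), each of length c·t, with pairwise disjoint interiors, whose union Ĩ (resp. J̃) has convex hull equal to I (resp. J). Then ⋃_{i=1}^{n} ⋃_{j=1}^{n} f(I_i × J_j) = f(Ĩ × J̃) is a (connected) interval, equal to f(I × J) = [ f(a, b), f(a+t, b+t) ]. -/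
open Set

private lemma exists_sorted_subintervals
    (n : ℕ) (hn : 2 ≤ n) (c t a : ℝ) (hc : 0 < c) (ht : 0 < t)
    (l : Fin n → ℝ)
    (hsub : ∀ i, Icc (l i) (l i + c * t) ⊆ Icc a (a + t))
    (hdisj : ∀ i i', i ≠ i' →
      interior (Icc (l i) (l i + c * t)) ∩ interior (Icc (l i') (l i' + c * t)) = ∅)
    (hhull : convexHull ℝ (⋃ i, Icc (l i) (l i + c * t)) = Icc a (a + t)) :
    ∃ l' : Fin n → ℝ,
      (∀ i, ∃ i', l' i = l i') ∧
      (∀ i, Icc (l' i) (l' i + c * t) ⊆ Icc a (a + t)) ∧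
      l' ⟨0, by omega⟩ = a ∧
      l' ⟨n - 1, by omega⟩ + c * t = a + t ∧
      (∀ k : ℕ, ∀ h : k + 1 < n, l' ⟨k, by omega⟩ + c * t ≤ l' ⟨k + 1, h⟩) ∧
      (∀ k : ℕ, ∀ h : k + 1 < n,
        l' ⟨k + 1, h⟩ ≤ l' ⟨k, by omega⟩ + c * t + (t - c * t * n)) := by
  have hct : 0 < c * t := mul_pos hc ht
  set σ := Tuple.sort l with hσ
  set l' : Fin n → ℝ := l ∘ σ with hl'
  have hmono : Monotone l' := Tuple.monotone_sort l
  have huni : (⋃ i, Icc (l' i) (l' i + c * t)) = (⋃ i, Icc (l i) (l i + c * t)) :=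
    σ.surjective.iUnion_comp (fun i => Icc (l i) (l i + c * t))
  have hsub' : ∀ i, Icc (l' i) (l' i + c * t) ⊆ Icc a (a + t) := fun i => hsub (σ i)
  -- separation of consecutive intervals
  have sep : ∀ k : ℕ, ∀ h : k + 1 < n, l' ⟨k, by omega⟩ + c * t ≤ l' ⟨k + 1, h⟩ := by
    intro k h
    by_contra hlt
    push_neg at hlt
    have hle : l' ⟨k, by omega⟩ ≤ l' ⟨k + 1, h⟩ := hmono (by simp [Fin.le_def])
    have hne : σ ⟨k, by omega⟩ ≠ σ ⟨k + 1, h⟩ := by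
      intro he
      have := σ.injective he
      simp [Fin.ext_iff] at this
    have hdj := hdisj _ _ hne
    rw [interior_Icc, interior_Icc] at hdj
    have hx : (l' ⟨k + 1, h⟩ + (l' ⟨k, by omega⟩ + c * t)) / 2 ∈
        Ioo (l (σ ⟨k, by omega⟩)) (l (σ ⟨k, by omega⟩) + c * t) ∩
        Ioo (l (σ ⟨k + 1, h⟩)) (l (σ ⟨k + 1, h⟩) + c * t) := by
      constructor <;> constructor <;>
        simp only [hl', Function.comp] at hle hlt ⊢ <;> linarith
    rw [hdj] at hx
    exact hx
  -- chain bound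
  have chain : ∀ d k : ℕ, ∀ h : k + d < n,
      l' ⟨k, by omega⟩ + d * (c * t) ≤ l' ⟨k + d, h⟩ := by
    intro d
    induction d with
    | zero => intro k h; simp
    | succ d ih =>
      intro k h
      have h1 : k + d < n := by omega
      have h2 := ih k h1
      have h3 := sep (k + d) (by omega)
      have : l' ⟨k + d, h1⟩ + c * t ≤ l' ⟨k + (d + 1), h⟩ := by
        convert h3 using 3 <;> omega
      push_cast
      linarith
  -- endpoints
  have hmem0 : l' ⟨0, by omega⟩ ∈ Icc a (a + t) :=
    hsub' _ ⟨le_rfl, by linarith⟩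
  have hmin : l' ⟨0, by omega⟩ = a := by
    have hIci : (⋃ i, Icc (l i) (l i + c * t)) ⊆ Ici (l' ⟨0, by omega⟩) := by
      rw [← huni]
      refine iUnion_subset fun i => ?_
      intro x hx
      exact le_trans (hmono (by simp [Fin.le_def])) hx.1
    have := convexHull_min hIci (convex_Ici _ : Convex ℝ _)
    rw [hhull] at this
    have ha := this ⟨le_rfl, by linarith⟩
    exact le_antisymm (by exact ha) hmem0.1
  have hmemL : l' ⟨n - 1, by omega⟩ + c * t ∈ Icc a (a + t) :=
    hsub' _ ⟨by linarith, le_rfl⟩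
  have hmax : l' ⟨n - 1, by omega⟩ + c * t = a + t := by
    have hIic : (⋃ i, Icc (l i) (l i + c * t)) ⊆ Iic (l' ⟨n - 1, by omega⟩ + c * t) := by
      rw [← huni]
      refine iUnion_subset fun i => ?_
      intro x hx
      exact le_trans hx.2 (by
        have : l' i ≤ l' ⟨n - 1, by omega⟩ := hmono (by simp [Fin.le_def]; omega)
        linarith)
    have := convexHull_min hIic (convex_Iic _ : Convex ℝ _)
    rw [hhull] at this
    have ha := this ⟨by linarith, le_rfl⟩
    exact le_antisymm hmemL.2 ha
  refine ⟨l', fun i => ⟨σ i, rfl⟩, hsub', hmin, hmax, sep, ?_⟩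
  intro k h
  have h1 : l' ⟨0, by omega⟩ + (k : ℝ) * (c * t) ≤ l' ⟨k, by omega⟩ := by
    have := chain k 0 (by omega)
    convert this using 3 <;> omega
  have h2 : l' ⟨k + 1, h⟩ + ((n - 2 - k : ℕ) : ℝ) * (c * t) ≤ l' ⟨n - 1, by omega⟩ := by
    have := chain (n - 2 - k) (k + 1) (by omega)
    convert this using 3 <;> omega
  have hcast : ((n - 2 - k : ℕ) : ℝ) = (n : ℝ) - 2 - k := by
    rw [Nat.sub_sub, Nat.cast_sub (by omega)]
    push_cast
    ring
  rw [hcast] at h2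
  rw [hmin] at h1
  nlinarith [hct]

private lemma segment_mono_aux
    {U : Set (ℝ × ℝ)} (hU : IsOpen U) {f : ℝ × ℝ → ℝ} (hf : ContDiffOn ℝ 1 f U)
    {K : Set (ℝ × ℝ)} (hKU : K ⊆ U) (hK : Convex ℝ K)
    (P Q : ℝ × ℝ) (hP : P ∈ K) (hQ : Q ∈ K)
    (hd : ∀ p ∈ K,
      0 ≤ (Q.1 - P.1) * fderiv ℝ f p (1, 0) + (Q.2 - P.2) * fderiv ℝ f p (0, 1)) :
    f P ≤ f Q := by
  have hdiffAt : ∀ p ∈ K, HasFDerivAt f (fderiv ℝ f p) p := fun p hp =>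
    (((hf.differentiableOn one_ne_zero) p (hKU hp)).differentiableAt
      (hU.mem_nhds (hKU hp))).hasFDerivAt
  set γ : ℝ → ℝ × ℝ := fun s => P + s • (Q - P) with hγ
  have hγmem : ∀ s ∈ Icc (0:ℝ) 1, γ s ∈ K := by
    intro s hs
    have := hK hP hQ (by linarith [hs.2] : (0:ℝ) ≤ 1 - s) hs.1 (by ring)
    convert this using 1
    simp only [hγ]
    module
  have hlin : ∀ p : ℝ × ℝ, fderiv ℝ f p (Q - P) =
      (Q.1 - P.1) * fderiv ℝ f p (1, 0) + (Q.2 - P.2) * fderiv ℝ f p (0, 1) := by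
    intro p
    have hv : Q - P = (Q.1 - P.1) • ((1:ℝ), (0:ℝ)) + (Q.2 - P.2) • ((0:ℝ), (1:ℝ)) := by
      ext <;> simp
    rw [hv, map_add, map_smul, map_smul]
    simp [smul_eq_mul]
  have hder : ∀ s ∈ Icc (0:ℝ) 1, HasDerivAt (f ∘ γ) (fderiv ℝ f (γ s) (Q - P)) s := by
    intro s hs
    have hγd : HasDerivAt γ (Q - P) s := by
      have := ((hasDerivAt_id s).smul_const (Q - P)).const_add P
      simpa only [id_eq, one_smul] using this
    exact (hdiffAt _ (hγmem s hs)).comp_hasDerivAt s hγd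
  have hmono : MonotoneOn (f ∘ γ) (Icc (0:ℝ) 1) := by
    apply monotoneOn_of_deriv_nonneg (convex_Icc 0 1)
    · intro s hs
      exact (hder s hs).continuousAt.continuousWithinAt
    · intro s hs
      rw [interior_Icc] at hs
      exact ((hder s (Ioo_subset_Icc_self hs)).differentiableAt).differentiableWithinAt
    · intro s hs
      rw [interior_Icc] at hs
      rw [(hder s (Ioo_subset_Icc_self hs)).deriv, hlin]
      exact hd _ (hγmem s (Ioo_subset_Icc_self hs))
  have h01 := hmono (left_mem_Icc.2 zero_le_one) (right_mem_Icc.2 zero_le_one) zero_le_one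
  simpa [hγ] using h01

private lemma rect_image_aux
    {U : Set (ℝ × ℝ)} (hU : IsOpen U) {f : ℝ × ℝ → ℝ} (hf : ContDiffOn ℝ 1 f U)
    {K : Set (ℝ × ℝ)} (hKU : K ⊆ U)
    (hdx : ∀ p ∈ K, 0 < fderiv ℝ f p (1, 0))
    (hdy : ∀ p ∈ K, 0 < fderiv ℝ f p (0, 1))
    (p₁ p₂ q₁ q₂ : ℝ) (hp : p₁ ≤ p₂) (hq : q₁ ≤ q₂)
    (hR : Icc p₁ p₂ ×ˢ Icc q₁ q₂ ⊆ K) :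
    f '' (Icc p₁ p₂ ×ˢ Icc q₁ q₂) = Icc (f (p₁, q₁)) (f (p₂, q₂)) := by
  have hconv : Convex ℝ (Icc p₁ p₂ ×ˢ Icc q₁ q₂) := (convex_Icc _ _).prod (convex_Icc _ _)
  have hc1 : (p₁, q₁) ∈ Icc p₁ p₂ ×ˢ Icc q₁ q₂ := ⟨⟨le_rfl, hp⟩, ⟨le_rfl, hq⟩⟩
  have hc2 : (p₂, q₂) ∈ Icc p₁ p₂ ×ˢ Icc q₁ q₂ := ⟨⟨hp, le_rfl⟩, ⟨hq, le_rfl⟩⟩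
  apply Subset.antisymm
  · rintro v ⟨p, hpR, rfl⟩
    constructor
    · apply segment_mono_aux hU hf (hR.trans hKU) hconv _ _ hc1 hpR
      intro r hr
      have h1 := hdx r (hR hr); have h2 := hdy r (hR hr)
      have hx : (0:ℝ) ≤ p.1 - p₁ := by linarith [hpR.1.1]
      have hy : (0:ℝ) ≤ p.2 - q₁ := by linarith [hpR.2.1]
      positivity
    · apply segment_mono_aux hU hf (hR.trans hKU) hconv _ _ hpR hc2
      intro r hr
      have h1 := hdx r (hR hr); have h2 := hdy r (hR hr)
      have hx : (0:ℝ) ≤ p₂ - p.1 := by linarith [hpR.1.2]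
      have hy : (0:ℝ) ≤ q₂ - p.2 := by linarith [hpR.2.2]
      positivity
  · have hpre : IsPreconnected (f '' (Icc p₁ p₂ ×ˢ Icc q₁ q₂)) :=
      (hconv.isPreconnected).image f (hf.continuousOn.mono (hR.trans hKU))
    exact hpre.Icc_subset ⟨_, hc1, rfl⟩ ⟨_, hc2, rfl⟩

set_option maxHeartbeats 1000000 in
/-- combined claim in the proof of Lemma 2.2 for one subdivision step.
Let `f` be continuously differentiable on the open set `U ⊆ ℝ²` with `∂ₓ f > 0` and
`∂_y f > 0` on a closed square `I × J ⊆ U`, `I = [a, a+t]`, `J = [b, b+t]`, `t > 0`.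
Fix `n ≥ 2` and `0 < cn < 1`, and suppose `1 - cn < ∂_y f / ∂ₓ f < c / (1 - nc)` on
`I × J`.  If `I_1, …, I_n ⊆ I` and `J_1, …, J_n ⊆ J` are closed intervals of length
`c·t` with pairwise disjoint interiors whose unions `Ĩ`, `J̃` have convex hulls `I`,
`J` respectively, then `⋃_i ⋃_j f(I_i × J_j) = f(Ĩ × J̃)` is the interval
`f(I × J) = [f(a, b), f(a+t, b+t)]`. -/
theorem union_image_subsquares_eq_image_square
    (U : Set (ℝ × ℝ)) (hU : IsOpen U)
    (f : ℝ × ℝ → ℝ) (hf : ContDiffOn ℝ 1 f U)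
    (a b t : ℝ) (ht : 0 < t)
    (hIJU : Icc a (a + t) ×ˢ Icc b (b + t) ⊆ U)
    (hdx : ∀ p ∈ Icc a (a + t) ×ˢ Icc b (b + t), 0 < fderiv ℝ f p (1, 0))
    (hdy : ∀ p ∈ Icc a (a + t) ×ˢ Icc b (b + t), 0 < fderiv ℝ f p (0, 1))
    (n : ℕ) (hn : 2 ≤ n) (c : ℝ) (hc : 0 < c) (hcn : c * (n : ℝ) < 1)
    (hratio : ∀ p ∈ Icc a (a + t) ×ˢ Icc b (b + t),
      1 - c * (n : ℝ) < fderiv ℝ f p (0, 1) / fderiv ℝ f p (1, 0) ∧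
        fderiv ℝ f p (0, 1) / fderiv ℝ f p (1, 0) < c / (1 - (n : ℝ) * c))
    (l : Fin n → ℝ) (m : Fin n → ℝ)
    (hIsub : ∀ i, Icc (l i) (l i + c * t) ⊆ Icc a (a + t))
    (hJsub : ∀ j, Icc (m j) (m j + c * t) ⊆ Icc b (b + t))
    (hIdisj : ∀ i i', i ≠ i' →
      interior (Icc (l i) (l i + c * t)) ∩ interior (Icc (l i') (l i' + c * t)) = ∅)
    (hJdisj : ∀ j j', j ≠ j' →
      interior (Icc (m j) (m j + c * t)) ∩ interior (Icc (m j') (m j' + c * t)) = ∅)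
    (hIhull : convexHull ℝ (⋃ i, Icc (l i) (l i + c * t)) = Icc a (a + t))
    (hJhull : convexHull ℝ (⋃ j, Icc (m j) (m j + c * t)) = Icc b (b + t)) :
    (⋃ i, ⋃ j, f '' (Icc (l i) (l i + c * t) ×ˢ Icc (m j) (m j + c * t))) =
        f '' ((⋃ i, Icc (l i) (l i + c * t)) ×ˢ (⋃ j, Icc (m j) (m j + c * t))) ∧
      (⋃ i, ⋃ j, f '' (Icc (l i) (l i + c * t) ×ˢ Icc (m j) (m j + c * t))) =
        f '' (Icc a (a + t) ×ˢ Icc b (b + t)) ∧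
      f '' (Icc a (a + t) ×ˢ Icc b (b + t)) = Icc (f (a, b)) (f (a + t, b + t)) := by
  classical
  have hct : 0 < c * t := mul_pos hc ht
  have hnpos : 0 < n := by omega
  have hncR : (0:ℝ) < 1 - (n:ℝ) * c := by
    have : c * (n:ℝ) = (n:ℝ) * c := mul_comm _ _
    linarith [hcn, this ▸ hcn]
  set K := Icc a (a + t) ×ˢ Icc b (b + t) with hK
  -- part 1 : pure set algebra
  have part1 : (⋃ i, ⋃ j, f '' (Icc (l i) (l i + c * t) ×ˢ Icc (m j) (m j + c * t))) =
      f '' ((⋃ i, Icc (l i) (l i + c * t)) ×ˢ (⋃ j, Icc (m j) (m j + c * t))) := by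
    simp only [Set.iUnion_prod_const, Set.prod_iUnion, Set.image_iUnion]
    exact Set.iUnion_comm _
  -- part 3 : image of the whole square
  have part3 : f '' (Icc a (a + t) ×ˢ Icc b (b + t)) = Icc (f (a, b)) (f (a + t, b + t)) :=
    rect_image_aux hU hf hIJU hdx hdy a (a + t) b (b + t) (by linarith) (by linarith)
      subset_rfl
  refine ⟨part1, ?_, part3⟩
  -- ratio consequences
  have hr1 : ∀ p ∈ K, (1 - c * (n:ℝ)) * fderiv ℝ f p (1, 0) ≤ fderiv ℝ f p (0, 1) := by
    intro p hp
    have h := (hratio p hp).1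
    have hx := hdx p hp
    rw [lt_div_iff₀ hx] at h
    linarith
  have hr2 : ∀ p ∈ K, fderiv ℝ f p (0, 1) * (1 - (n:ℝ) * c) ≤ c * fderiv ℝ f p (1, 0) := by
    intro p hp
    have h := (hratio p hp).2
    have hx := hdx p hp
    rw [div_lt_div_iff₀ hx hncR] at h
    linarith
  -- subset direction of part 2
  apply Subset.antisymm
  · refine iUnion_subset fun i => iUnion_subset fun j => ?_
    exact image_mono (prod_mono (hIsub i) (hJsub j))
  -- superset : every value is attained in some subsquare
  rw [part3]
  obtain ⟨l', hl'orig, hl'sub, hl'0, hl'last, hl'sep, hl'gap⟩ :=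
    exists_sorted_subintervals n hn c t a hc ht l hIsub hIdisj hIhull
  obtain ⟨m', hm'orig, hm'sub, hm'0, hm'last, hm'sep, hm'gap⟩ :=
    exists_sorted_subintervals n hn c t b hc ht m hJsub hJdisj hJhull
  intro v hv
  -- each subsquare lies in K
  have hsq : ∀ i j : Fin n,
      Icc (l' i) (l' i + c * t) ×ˢ Icc (m' j) (m' j + c * t) ⊆ K :=
    fun i j => prod_mono (hl'sub i) (hm'sub j)
  have memI : ∀ i : Fin n, l' i ∈ Icc a (a + t) ∧ l' i + c * t ∈ Icc a (a + t) :=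
    fun i => ⟨hl'sub i ⟨le_rfl, by linarith⟩, hl'sub i ⟨by linarith, le_rfl⟩⟩
  have memJ : ∀ j : Fin n, m' j ∈ Icc b (b + t) ∧ m' j + c * t ∈ Icc b (b + t) :=
    fun j => ⟨hm'sub j ⟨le_rfl, by linarith⟩, hm'sub j ⟨by linarith, le_rfl⟩⟩
  have hKconv : Convex ℝ K := (convex_Icc _ _).prod (convex_Icc _ _)
  -- choose the column
  have h0n : (0:ℕ) < n := hnpos
  set s₁ : Finset (Fin n) := Finset.univ.filter (fun i => f (l' i, b) ≤ v) with hs₁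
  have hs₁ne : s₁.Nonempty := by
    refine ⟨⟨0, h0n⟩, ?_⟩
    simp only [hs₁, Finset.mem_filter, Finset.mem_univ, true_and]
    rw [hl'0]
    exact hv.1
  set i : Fin n := s₁.max' hs₁ne with hi
  have hi1 : f (l' i, b) ≤ v := by
    have := s₁.max'_mem hs₁ne
    simp only [hs₁, Finset.mem_filter] at this
    exact this.2
  have hi2 : ∀ i' : Fin n, f (l' i', b) ≤ v → i' ≤ i := by
    intro i' h
    apply Finset.le_max'
    simp only [hs₁, Finset.mem_filter, Finset.mem_univ, true_and]
    exact h
  -- the value is bounded by the top of column i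
  have colUB : v ≤ f (l' i + c * t, b + t) := by
    by_cases hlast : (i : ℕ) = n - 1
    · have hieq : i = ⟨n - 1, by omega⟩ := Fin.ext hlast
      rw [hieq, hl'last]
      exact hv.2
    · set i1 : Fin n := ⟨(i : ℕ) + 1, by omega⟩ with hi1def
      have hvlt : v < f (l' i1, b) := by
        by_contra hcon
        push_neg at hcon
        have := hi2 i1 hcon
        rw [Fin.le_def] at this
        simp [hi1def] at this
      have hseg : f (l' i1, b) ≤ f (l' i + c * t, b + t) := by
        have hPm : ((l' i1, b) : ℝ × ℝ) ∈ K :=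
          Set.mem_prod.2 ⟨(memI i1).1, left_mem_Icc.2 (by linarith)⟩
        have hQm : ((l' i + c * t, b + t) : ℝ × ℝ) ∈ K :=
          Set.mem_prod.2 ⟨(memI i).2, right_mem_Icc.2 (by linarith)⟩
        apply segment_mono_aux hU hf hIJU hKconv (l' i1, b) (l' i + c * t, b + t) hPm hQm
        intro p hp
        have hD1 := hdx p hp
        have hD2 := hdy p hp
        have hR1 := hr1 p hp
        have hgap := hl'gap (i : ℕ) (by omega)
        have hsep := hl'sep (i : ℕ) (by omega)
        have hieq : (⟨(i : ℕ), by omega⟩ : Fin n) = i := Fin.ext rfl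
        rw [hieq] at hgap hsep
        have hi1eq : (⟨(i : ℕ) + 1, by omega⟩ : Fin n) = i1 := Fin.ext rfl
        rw [hi1eq] at hgap hsep
        show 0 ≤ (l' i + c * t - l' i1) * fderiv ℝ f p (1, 0) +
          (b + t - b) * fderiv ℝ f p (0, 1)
        nlinarith [mul_le_mul_of_nonneg_right hgap hD1.le,
          mul_le_mul_of_nonneg_right hsep hD1.le]
      linarith
  -- choose the row within column i
  set s₂ : Finset (Fin n) := Finset.univ.filter (fun j => f (l' i, m' j) ≤ v) with hs₂
  have hs₂ne : s₂.Nonempty := by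
    refine ⟨⟨0, h0n⟩, ?_⟩
    simp only [hs₂, Finset.mem_filter, Finset.mem_univ, true_and]
    rw [hm'0]
    exact hi1
  set j : Fin n := s₂.max' hs₂ne with hj
  have hj1 : f (l' i, m' j) ≤ v := by
    have := s₂.max'_mem hs₂ne
    simp only [hs₂, Finset.mem_filter] at this
    exact this.2
  have hj2 : ∀ j' : Fin n, f (l' i, m' j') ≤ v → j' ≤ j := by
    intro j' h
    apply Finset.le_max'
    simp only [hs₂, Finset.mem_filter, Finset.mem_univ, true_and]
    exact h
  have sqUB : v ≤ f (l' i + c * t, m' j + c * t) := by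
    by_cases hlast : (j : ℕ) = n - 1
    · have hjeq : j = ⟨n - 1, by omega⟩ := Fin.ext hlast
      rw [hjeq, hm'last]
      exact colUB
    · set j1 : Fin n := ⟨(j : ℕ) + 1, by omega⟩ with hj1def
      have hvlt : v < f (l' i, m' j1) := by
        by_contra hcon
        push_neg at hcon
        have := hj2 j1 hcon
        rw [Fin.le_def] at this
        simp [hj1def] at this
      have hseg : f (l' i, m' j1) ≤ f (l' i + c * t, m' j + c * t) := by
        have hPm : ((l' i, m' j1) : ℝ × ℝ) ∈ K :=
          Set.mem_prod.2 ⟨(memI i).1, (memJ j1).1⟩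
        have hQm : ((l' i + c * t, m' j + c * t) : ℝ × ℝ) ∈ K :=
          Set.mem_prod.2 ⟨(memI i).2, (memJ j).2⟩
        apply segment_mono_aux hU hf hIJU hKconv (l' i, m' j1) (l' i + c * t, m' j + c * t) hPm hQm
        intro p hp
        have hD1 := hdx p hp
        have hD2 := hdy p hp
        have hR2 := hr2 p hp
        have hgap := hm'gap (j : ℕ) (by omega)
        have hsep := hm'sep (j : ℕ) (by omega)
        have hjeq : (⟨(j : ℕ), by omega⟩ : Fin n) = j := Fin.ext rfl
        rw [hjeq] at hgap hsep
        have hj1eq : (⟨(j : ℕ) + 1, by omega⟩ : Fin n) = j1 := Fin.ext rfl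
        rw [hj1eq] at hgap hsep
        show 0 ≤ (l' i + c * t - l' i) * fderiv ℝ f p (1, 0) +
          (m' j + c * t - m' j1) * fderiv ℝ f p (0, 1)
        nlinarith [mul_le_mul_of_nonneg_right hgap hD2.le,
          mul_le_mul_of_nonneg_right hsep hD2.le]
      linarith
  -- v lies in the image of subsquare (i, j)
  have himg : f '' (Icc (l' i) (l' i + c * t) ×ˢ Icc (m' j) (m' j + c * t)) =
      Icc (f (l' i, m' j)) (f (l' i + c * t, m' j + c * t)) :=
    rect_image_aux hU hf hIJU hdx hdy _ _ _ _ (by linarith) (by linarith) (hsq i j)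
  have hvmem : v ∈ f '' (Icc (l' i) (l' i + c * t) ×ˢ Icc (m' j) (m' j + c * t)) := by
    rw [himg]
    exact ⟨hj1, sqUB⟩
  obtain ⟨i', hi'⟩ := hl'orig i
  obtain ⟨j', hj'⟩ := hm'orig j
  rw [hi', hj'] at hvmem
  exact mem_iUnion.2 ⟨i', mem_iUnion.2 ⟨j', hvmem⟩⟩
end
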